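/- arXiv:2410.21612 — 4 statements merged into one kernel-verified Lean document; each statement's English description precedes it below -/
import Mathlib

section
/- Let L/K be the Artin-Schreier extension generated by a root x of X^p − X − α where α ∈ K is optimal. If v(α) < 0 and gcd(v(α), p) = 1, then L/K is wildly ramified, i.e., the value group of L equals (1/p)·Γ_K. -/
section Aux

variable {L : Type*} [Field L] (w : L → WithTop ℚ)

/-- negation preserves value -/
lemma aux_wneg (hw1 : w 1 = 0) (hwmul : ∀ x y : L, w (x * y) = w x + w y) :
    ∀ y : L, w (-y) = w y := by
  have h1 : w (-1 : L) + w (-1 : L) = 0 := by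
    rw [← hwmul]; norm_num [hw1]
  have h2 : w (-1 : L) = 0 := by
    cases h : w (-1 : L) with
    | top => rw [h] at h1; simp at h1
    | coe r =>
      rw [h] at h1
      have : r + r = 0 := by exact_mod_cast h1
      have : r = 0 := by linarith
      simp [this]
  intro y
  rw [show (-y : L) = -1 * y by ring, hwmul, h2, zero_add]

/-- value of sum with distinct values is the min -/
lemma aux_two (hwadd : ∀ x y : L, min (w x) (w y) ≤ w (x + y))
    (hwneg : ∀ y : L, w (-y) = w y) (u t : L) (h : w u ≠ w t) :
    w (u + t) = min (w u) (w t) := by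
  -- wlog w u < w t
  have main : ∀ u t : L, w u < w t → w (u + t) = w u := by
    intro u t hlt
    refine le_antisymm ?_ ?_
    · by_contra hc
      push_neg at hc
      have h3 : min (w (u + t)) (w (-t)) ≤ w ((u + t) + (-t)) := hwadd _ _
      rw [hwneg] at h3
      have : u + t + -t = u := by ring
      rw [this] at h3
      exact absurd h3 (not_le.mpr (lt_min hc hlt))
    · have h4 := hwadd u t
      rwa [min_eq_left hlt.le] at h4
  rcases lt_or_gt_of_ne h with hlt | hlt
  · rw [main u t hlt, min_eq_left hlt.le]
  · rw [show u + t = t + u by ring, main t u hlt, min_eq_right hlt.le]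

/-- ultrametric: sum over finset with "distinct or top" values -/
lemma aux_sum (hw0 : w 0 = ⊤)
    (hwadd : ∀ x y : L, min (w x) (w y) ≤ w (x + y))
    (hwneg : ∀ y : L, w (-y) = w y)
    {ι : Type*} (s : Finset ι) (f : ι → L)
    (H : ∀ i ∈ s, ∀ j ∈ s, w (f i) = w (f j) → w (f i) = ⊤ ∨ i = j) :
    w (∑ i ∈ s, f i) = s.inf (fun i => w (f i)) := by
  classical
  induction s using Finset.induction with
  | empty => simpa using hw0
  | insert a s ha ih =>
    have IH : w (∑ i ∈ s, f i) = s.inf (fun i => w (f i)) :=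
      ih (fun i hi j hj => H i (Finset.mem_insert_of_mem hi) j (Finset.mem_insert_of_mem hj))
    rw [Finset.sum_insert ha, Finset.inf_insert]
    by_cases hcase : w (f a) = w (∑ i ∈ s, f i)
    · -- then w (f a) = ⊤ and inf = ⊤
      have htop : w (f a) = ⊤ := by
        rcases s.eq_empty_or_nonempty with he | hne
        · subst he; simpa [hw0] using hcase
        · obtain ⟨j, hj, hjeq⟩ := Finset.exists_mem_eq_inf s hne (fun i => w (f i))
          have : w (f a) = w (f j) := by rw [hcase, IH, hjeq]
          rcases H a (Finset.mem_insert_self a s) j (Finset.mem_insert_of_mem hj) this with h | h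
          · exact h
          · exact absurd (h ▸ hj) ha
      have hstop : w (∑ i ∈ s, f i) = ⊤ := by rw [← hcase, htop]
      have : (⊤ : WithTop ℚ) ≤ w (f a + ∑ i ∈ s, f i) := by
        have := hwadd (f a) (∑ i ∈ s, f i)
        rwa [htop, hstop, min_self] at this
      rw [top_le_iff.mp this, htop, ← IH, hstop]
      simp
    · rw [aux_two w hwadd hwneg _ _ hcase, IH]

/-- power values -/
lemma aux_pow (hw1 : w 1 = 0) (hwmul : ∀ x y : L, w (x * y) = w x + w y)
    (y : L) (s : ℚ) (hs : w y = (s : WithTop ℚ)) :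
    ∀ n : ℕ, w (y ^ n) = ((n * s : ℚ) : WithTop ℚ) := by
  intro n
  induction n with
  | zero => simp [hw1]
  | succ n ih =>
    rw [pow_succ, hwmul, ih, hs, ← WithTop.coe_add]
    congr 1
    push_cast
    ring

end Aux

/-- Let `K` be a discrete valued field of characteristic `p` with
valuation `v` of value group `ℤ`, and let `α ∈ K` be *optimal* (either `v(α) > 0` or
`v(α + γ^p − γ) ≤ v(α)` for all `γ`, i.e. `v(α)` realizes the supremum over the
Artin-Schreier coset) with `α ∉ 𝒫(K)`.  Let `L = K[x]/(x^p − x − α)` be the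
Artin-Schreier extension generated by a root `x`, with a valuation `w` extending `v`.
If `v(α) < 0` and `gcd(v(α), p) = 1`, then `L/K` is wildly ramified: the value group of
`L` equals `(1/p)·Γ_K = (1/p)ℤ`. -/
theorem artinSchreier_wildly_ramified
    {K L : Type*} [Field K] [Field L] [Algebra K L]
    (p : ℕ) [Fact p.Prime] [CharP K p]
    (v : K → WithTop ℤ)
    (hv0 : v 0 = ⊤) (hv1 : v 1 = 0)
    (hvmul : ∀ x y : K, v (x * y) = v x + v y)
    (hvadd : ∀ x y : K, min (v x) (v y) ≤ v (x + y))
    (hvsurj : ∀ j : ℤ, ∃ x : K, v x = (j : WithTop ℤ))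
    (α : K) (hAS : ∀ γ : K, γ ^ p - γ ≠ α)
    (hopt : 0 < v α ∨ ∀ γ : K, v (α + (γ ^ p - γ)) ≤ v α)
    (x : L) (hx : x ^ p - x = algebraMap K L α)
    (hgen : Algebra.adjoin K {x} = ⊤) (hdeg : Module.finrank K L = p)
    (w : L → WithTop ℚ)
    (hw0 : w 0 = ⊤) (hw1 : w 1 = 0)
    (hwmul : ∀ x y : L, w (x * y) = w x + w y)
    (hwadd : ∀ x y : L, min (w x) (w y) ≤ w (x + y))
    (hcomp : ∀ y : K, w (algebraMap K L y) = WithTop.map (fun j : ℤ => (j : ℚ)) (v y))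
    (N : ℤ) (hval : v α = (N : WithTop ℤ)) (hneg : N < 0) (hcop : Int.gcd N p = 1) :
    ∀ q : ℚ, (∃ y : L, y ≠ 0 ∧ w y = (q : WithTop ℚ)) ↔ ∃ j : ℤ, q = (j : ℚ) / p := by
  classical
  have hp := Fact.out (p := p.Prime)
  have hp2 : 2 ≤ p := hp.two_le
  have hppos : 0 < p := hp.pos
  have hpQ : (p : ℚ) ≠ 0 := by exact_mod_cast hp.ne_zero
  have hwneg := aux_wneg w hw1 hwmul
  -- value of α
  have hα : w (algebraMap K L α) = ((N : ℚ) : WithTop ℚ) := by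
    rw [hcomp, hval]; rfl
  -- value of x is N/p
  have hwx : w x = (((N : ℚ) / p : ℚ) : WithTop ℚ) := by
    -- first: w x ≠ ⊤
    have hxt : w x ≠ ⊤ := by
      intro ht
      have hxp : w (x ^ p) = ⊤ := by
        have : x ^ p = x * x ^ (p - 1) := by
          rw [← pow_succ']
          congr 1
          omega
        rw [this, hwmul, ht, top_add]
      have h3 : min (w (x ^ p)) (w (-x)) ≤ w (x ^ p + -x) := hwadd _ _
      rw [hxp, hwneg, ht, min_self, ← sub_eq_add_neg, hx, hα] at h3
      exact absurd (top_le_iff.mp h3) (by simp)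
    obtain ⟨r, hr⟩ : ∃ r : ℚ, w x = (r : WithTop ℚ) := by
      cases h : w x with
      | top => exact absurd h hxt
      | coe r => exact ⟨r, rfl⟩
    have hpow := aux_pow w hw1 hwmul x r hr p
    have hrneg : r < 0 := by
      by_contra hc
      push_neg at hc
      have h3 : min (w (x ^ p)) (w (-x)) ≤ w (x ^ p + -x) := hwadd _ _
      rw [hpow, hwneg, hr, ← sub_eq_add_neg, hx, hα] at h3
      have h4 : (0 : WithTop ℚ) ≤ ((N : ℚ) : WithTop ℚ) := by
        refine le_trans ?_ h3
        apply le_min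
        · exact_mod_cast mul_nonneg (by positivity) hc
        · exact_mod_cast hc
      have : (0 : ℚ) ≤ (N : ℚ) := by exact_mod_cast h4
      have : (N : ℚ) < 0 := by exact_mod_cast hneg
      linarith
    -- p * r < r
    have hlt : (p : ℚ) * r < r := by
      have h2 : (2 : ℚ) ≤ (p : ℚ) := by exact_mod_cast hp2
      have h3 : (p : ℚ) * r ≤ 2 * r := mul_le_mul_of_nonpos_right h2 hrneg.le
      linarith
    have hne : w (x ^ p) ≠ w (-x) := by
      rw [hpow, hwneg, hr]
      exact_mod_cast hlt.ne
    have h5 : w (x ^ p + -x) = min (w (x ^ p)) (w (-x)) := aux_two w hwadd hwneg _ _ hne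
    rw [← sub_eq_add_neg, hx, hα, hpow, hwneg, hr] at h5
    have h6 : ((N : ℚ) : WithTop ℚ) = (((p : ℚ) * r : ℚ) : WithTop ℚ) := by
      rw [h5, min_eq_left (by exact_mod_cast hlt.le)]
    have h7 : (N : ℚ) = (p : ℚ) * r := by exact_mod_cast h6
    rw [hr]
    congr 1
    field_simp [h7]
    linarith
  -- p does not divide N
  have hpN : ¬ ((p : ℤ) ∣ N) := by
    intro hdvd
    have : (p : ℤ) ∣ Int.gcd N p := Int.dvd_coe_gcd hdvd dvd_rfl
    rw [hcop] at this
    have := Int.le_of_dvd one_pos this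
    omega
  intro q
  constructor
  · -- forward: every value is of form j/p
    rintro ⟨y, hy0, hyq⟩
    -- y = aeval x f
    have hmem : y ∈ (Polynomial.aeval x : Polynomial K →ₐ[K] L).range := by
      rw [← Algebra.adjoin_singleton_eq_range_aeval, hgen]; trivial
    obtain ⟨f, hf0⟩ := hmem
    have hf : Polynomial.aeval x f = y := hf0
    set P : Polynomial K := Polynomial.X ^ p - (Polynomial.X + Polynomial.C α) with hP
    have hdegXC : (Polynomial.X + Polynomial.C α).degree < (p : WithBot ℕ) := by
      apply lt_of_le_of_lt (Polynomial.degree_add_le _ _)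
      rw [max_lt_iff]
      constructor
      · rw [Polynomial.degree_X]; exact_mod_cast hp2
      · exact lt_of_le_of_lt Polynomial.degree_C_le (by exact_mod_cast hppos)
    have hmon : P.Monic := Polynomial.monic_X_pow_sub hdegXC
    have hPdeg : P.degree = p := by
      rw [hP, Polynomial.degree_sub_eq_left_of_degree_lt
        (by rwa [Polynomial.degree_X_pow]), Polynomial.degree_X_pow]
    have hPaev : Polynomial.aeval x P = 0 := by
      rw [hP]
      simp only [map_sub, map_add, map_pow, Polynomial.aeval_X, Polynomial.aeval_C]
      rw [sub_add_eq_sub_sub] at *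
      rw [show x ^ p - x - algebraMap K L α = 0 ↔ x ^ p - x = algebraMap K L α from
        sub_eq_zero]
      exact hx
    set g : Polynomial K := f %ₘ P with hg
    have hyg : Polynomial.aeval x g = y := by
      conv_rhs => rw [← hf, ← Polynomial.modByMonic_add_div f P]
      rw [map_add, map_mul, hPaev, zero_mul, add_zero]
    have hgne : g ≠ 0 := by
      intro h
      rw [h, map_zero] at hyg
      exact hy0 hyg.symm
    have hgdeg : g.natDegree < p := by
      rw [Polynomial.natDegree_lt_iff_degree_lt hgne]
      exact lt_of_lt_of_le (Polynomial.degree_modByMonic_lt f hmon) (le_of_eq hPdeg)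
    have hysum : y = ∑ i ∈ Finset.range p, g.coeff i • x ^ i := by
      rw [← hyg, Polynomial.aeval_eq_sum_range' hgdeg]
    -- values of terms
    have hterm : ∀ i : ℕ, w (g.coeff i • x ^ i) =
        WithTop.map (fun j : ℤ => (j : ℚ)) (v (g.coeff i)) + ((i * ((N : ℚ) / p) : ℚ) : WithTop ℚ) := by
      intro i
      rw [Algebra.smul_def, hwmul, hcomp, aux_pow w hw1 hwmul x _ hwx i]
    -- distinctness hypothesis
    have Hdist : ∀ i ∈ Finset.range p, ∀ j ∈ Finset.range p,
        w (g.coeff i • x ^ i) = w (g.coeff j • x ^ j) →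
        w (g.coeff i • x ^ i) = ⊤ ∨ i = j := by
      intro i hi j hj heq
      by_cases htop : w (g.coeff i • x ^ i) = ⊤
      · exact Or.inl htop
      right
      rw [hterm i, hterm j] at heq
      rw [hterm i] at htop
      -- extract v values
      obtain ⟨m, hm⟩ : ∃ m : ℤ, v (g.coeff i) = (m : WithTop ℤ) := by
        cases h : v (g.coeff i) with
        | top => rw [h] at htop; simp at htop
        | coe m => exact ⟨m, rfl⟩
      have hjne : v (g.coeff j) ≠ ⊤ := by
        intro h
        rw [hm, h, WithTop.map_top, WithTop.map_coe, top_add, ← WithTop.coe_add] at heq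
        exact WithTop.coe_ne_top heq
      obtain ⟨m', hm'⟩ : ∃ m' : ℤ, v (g.coeff j) = (m' : WithTop ℤ) := by
        cases h : v (g.coeff j) with
        | top => exact absurd h hjne
        | coe m' => exact ⟨m', rfl⟩
      rw [hm, hm', WithTop.map_coe, WithTop.map_coe, ← WithTop.coe_add, ← WithTop.coe_add] at heq
      have heqQ : (m : ℚ) + i * ((N : ℚ) / p) = (m' : ℚ) + j * ((N : ℚ) / p) := by
        exact_mod_cast heq
      have heqZ : (m * p + i * N : ℤ) = (m' * p + j * N : ℤ) := by
        have : ((m * p + i * N : ℤ) : ℚ) = ((m' * p + j * N : ℤ) : ℚ) := by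
          push_cast
          field_simp at heqQ ⊢
          linarith
        exact_mod_cast this
      have hdvd : (p : ℤ) ∣ ((i : ℤ) - j) * N := by
        have : ((i : ℤ) - j) * N = (m' - m) * p := by ring_nf; linarith [heqZ]
        rw [this]
        exact ⟨m' - m, by ring⟩
      have hpij : (p : ℤ) ∣ ((i : ℤ) - j) := by
        rcases (Int.Prime.dvd_mul' (by exact_mod_cast hp) hdvd) with h | h
        · exact h
        · exact absurd h hpN
      have hi' := Finset.mem_range.mp hi
      have hj' := Finset.mem_range.mp hj
      have hzero : (i : ℤ) - j = 0 := by
        apply Int.eq_zero_of_abs_lt_dvd hpij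
        rw [abs_sub_lt_iff]
        constructor <;> [skip; skip] <;>
          · have : (i : ℤ) < p := by exact_mod_cast hi'
            have : (j : ℤ) < p := by exact_mod_cast hj'
            omega
      omega
    have hsum := aux_sum w hw0 hwadd hwneg (Finset.range p) (fun i => g.coeff i • x ^ i) Hdist
    rw [← hysum, hyq] at hsum
    obtain ⟨i, hi, hieq⟩ := Finset.exists_mem_eq_inf (Finset.range p)
      ⟨0, Finset.mem_range.mpr hppos⟩ (fun i => w (g.coeff i • x ^ i))
    rw [← hsum] at hieq
    rw [hterm i] at hieq
    obtain ⟨m, hm⟩ : ∃ m : ℤ, v (g.coeff i) = (m : WithTop ℤ) := by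
      cases h : v (g.coeff i) with
      | top => rw [h] at hieq; simp at hieq
      | coe m => exact ⟨m, rfl⟩
    rw [hm, WithTop.map_coe, ← WithTop.coe_add] at hieq
    have hqeq : q = (m : ℚ) + i * ((N : ℚ) / p) := by exact_mod_cast hieq
    exact ⟨m * p + i * N, by push_cast [hqeq]; field_simp⟩
  · -- reverse: construct element with value j/p
    rintro ⟨j, rfl⟩
    -- Bezout
    have hbez : (1 : ℤ) = N * Int.gcdA N p + p * Int.gcdB N p := by
      have := Int.gcd_eq_gcd_ab N p
      rw [hcop] at this
      exact_mod_cast this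
    set a0 : ℤ := j * Int.gcdA N p with ha0
    have hpz : (p : ℤ) ≠ 0 := by exact_mod_cast hp.ne_zero
    set a : ℕ := (a0 % p).toNat with ha
    have haz : (a : ℤ) = a0 % p := Int.toNat_of_nonneg (Int.emod_nonneg a0 hpz)
    have hdvd1 : (p : ℤ) ∣ a0 - a := by
      rw [haz, Int.emod_def]
      exact ⟨a0 / p, by ring⟩
    have hdvd2 : (p : ℤ) ∣ j - N * a0 := by
      have : j - N * a0 = j * (1 - N * Int.gcdA N p) := by rw [ha0]; ring
      rw [this]
      have : (1 : ℤ) - N * Int.gcdA N p = p * Int.gcdB N p := by linarith [hbez]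
      rw [this]
      exact ⟨j * Int.gcdB N p, by ring⟩
    have hdvd : (p : ℤ) ∣ j - N * a := by
      have : j - N * a = (j - N * a0) + N * (a0 - a) := by ring
      rw [this]
      exact dvd_add hdvd2 (Dvd.dvd.mul_left hdvd1 N)
    set b : ℤ := (j - N * a) / p with hb
    have hpb : (p : ℤ) * b = j - N * a := Int.mul_ediv_cancel' hdvd
    obtain ⟨c, hc⟩ := hvsurj b
    have hcne : c ≠ 0 := by
      intro h
      rw [h, hv0] at hc
      exact (WithTop.top_ne_coe hc)
    refine ⟨algebraMap K L c * x ^ a, ?_, ?_⟩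
    · apply mul_ne_zero
      · simpa using hcne
      · apply pow_ne_zero
        intro h
        rw [h, hw0] at hwx
        exact WithTop.top_ne_coe hwx
    · rw [hwmul, hcomp, hc, WithTop.map_coe, aux_pow w hw1 hwmul x _ hwx a, ← WithTop.coe_add]
      congr 1
      have : (p : ℚ) * b = (j : ℚ) - N * a := by exact_mod_cast hpb
      field_simp
      linarith [this]
end

section
/- Let K be a discrete valued field of characteristic p with valuation v and let α ∈ K be optimal with v(α) = 0 and such that X^p − X − α is irreducible. Then the residue of α is not in 𝒫(k) and the Artin-Schreier extension L = K[x]/(x^p − x − α) is unramified over K with residue extension l = k[ȳ]/(ȳ^p − ȳ − ᾱ), a separable extension of degree p. -/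
open Polynomial

section ValHelpers

variable {F : Type*} [Field F] {Γ : Type*} [AddCommGroup Γ] [LinearOrder Γ] [IsOrderedAddMonoid Γ]
variable (v : F → WithTop Γ)

theorem val_neg (hv1 : v 1 = 0) (hvmul : ∀ x y : F, v (x * y) = v x + v y) (a : F) :
    v (-a) = v a := by
  have h1 : v (-1) + v (-1) = 0 := by
    rw [← hvmul, neg_one_mul, neg_neg, hv1]
  have h2 : v (-1) = 0 := by
    cases h : v (-1) with
    | top => rw [h] at h1; simp at h1
    | coe t =>
      rw [h, ← WithTop.coe_add, ← WithTop.coe_zero, WithTop.coe_inj] at h1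
      have ht : t = 0 := by
        rcases lt_trichotomy t 0 with h' | h' | h'
        · exact absurd h1 (ne_of_lt (by simpa using add_lt_add h' h'))
        · exact h'
        · exact absurd h1 (ne_of_gt (by simpa using add_lt_add h' h'))
      rw [ht, WithTop.coe_zero]
  rw [show (-a) = (-1) * a by ring, hvmul, h2, zero_add]

theorem val_ne_top (hv1 : v 1 = 0) (hvmul : ∀ x y : F, v (x * y) = v x + v y)
    {a : F} (ha : a ≠ 0) : v a ≠ ⊤ := by
  intro h
  have := hvmul a a⁻¹
  rw [mul_inv_cancel₀ ha, hv1, h, top_add] at this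
  exact absurd this (by simp)

theorem val_add_eq_min (hv1 : v 1 = 0) (hvmul : ∀ x y : F, v (x * y) = v x + v y)
    (hvadd : ∀ x y : F, min (v x) (v y) ≤ v (x + y)) {a b : F} (hab : v a ≠ v b) :
    v (a + b) = min (v a) (v b) := by
  wlog h : v a < v b generalizing a b
  · rw [add_comm, min_comm]
    exact this (Ne.symm hab) (lt_of_le_of_ne (not_lt.mp h) (Ne.symm hab))
  rw [min_eq_left h.le]
  refine le_antisymm ?_ (by simpa [min_eq_left h.le] using hvadd a b)
  by_contra hcon
  have h2 : v a < v (a + b) := not_le.mp hcon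
  have h3 : min (v (a + b)) (v (-b)) ≤ v ((a + b) + (-b)) := hvadd _ _
  rw [val_neg v hv1 hvmul, show a + b + (-b) = a by ring] at h3
  exact absurd h3 (not_le.mpr (lt_min h2 h))

theorem val_sum (hv0 : v 0 = ⊤) (hvadd : ∀ x y : F, min (v x) (v y) ≤ v (x + y))
    {ι : Type*} (s : Finset ι) (f : ι → F) (c : WithTop Γ)
    (h : ∀ i ∈ s, c ≤ v (f i)) : c ≤ v (∑ i ∈ s, f i) := by
  classical
  induction s using Finset.induction_on with
  | empty => simp [hv0]
  | insert a s hnotmem ih =>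
    rw [Finset.sum_insert hnotmem]
    refine le_trans (le_min (h a (Finset.mem_insert_self a s))
      (ih fun i hi => h i (Finset.mem_insert_of_mem hi))) (hvadd _ _)

theorem val_pow_zero (hv1 : v 1 = 0) (hvmul : ∀ x y : F, v (x * y) = v x + v y)
    {a : F} (ha : v a = 0) (n : ℕ) : v (a ^ n) = 0 := by
  induction n with
  | zero => simpa using hv1
  | succ n ih => rw [pow_succ, hvmul, ih, ha, add_zero]

end ValHelpers

section ASdeg

variable (p : ℕ) [Fact p.Prime]

theorem zmod_prod_eq (l : Type*) [Field l] [CharP l p] :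
    ∏ t : ZMod p, (X - C ((ZMod.castHom (dvd_refl p) l) t)) = X ^ p - X := by
  have hp2 : 2 ≤ p := (Fact.out : p.Prime).two_le
  have hm : (X ^ p - X : (ZMod p)[X]).Monic := by
    apply monic_X_pow_sub
    exact lt_of_le_of_lt (degree_X_le (R := ZMod p)) (by exact_mod_cast (by omega : 1 < p))
  have hroots : (X ^ p - X : (ZMod p)[X]).roots = Finset.univ.val := by
    have := FiniteField.roots_X_pow_card_sub_X (ZMod p)
    rwa [ZMod.card] at this
  have hnd : (X ^ p - X : (ZMod p)[X]).natDegree = p :=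
    FiniteField.X_pow_card_sub_X_natDegree_eq _ (by omega)
  have hsplits : (X ^ p - X : (ZMod p)[X]).Splits := by
    rw [splits_iff_card_roots, hroots, hnd, ← Finset.card_def, Finset.card_univ, ZMod.card]
  have hprod := hsplits.eq_prod_roots_of_monic hm
  rw [hroots] at hprod
  have hbase : (X ^ p - X : (ZMod p)[X]) = ∏ t : ZMod p, (X - C t) := by
    rw [hprod]; rfl
  have := congrArg (Polynomial.map (ZMod.castHom (dvd_refl p) l)) hbase
  rw [Polynomial.map_sub, Polynomial.map_pow, Polynomial.map_X, Polynomial.map_prod] at this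
  simp only [Polynomial.map_sub, Polynomial.map_X, Polynomial.map_C] at this
  exact this.symm

end ASdeg



theorem AS_monic {F : Type*} [Field F] {p : ℕ} (hp2 : 2 ≤ p) (a : F) :
    (X ^ p - X - C a : F[X]).Monic := by
  have h : (X ^ p - X - C a : F[X]) = X ^ p - (X + C a) := by ring
  rw [h]
  apply monic_X_pow_sub
  refine lt_of_le_of_lt (degree_add_le _ _) ?_
  rw [max_lt_iff]
  constructor
  · exact lt_of_le_of_lt (degree_X_le (R := F)) (by exact_mod_cast (by omega : 1 < p))
  · exact lt_of_le_of_lt (degree_C_le) (by exact_mod_cast (by omega : 0 < p))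

theorem AS_degree {F : Type*} [Field F] {p : ℕ} (hp2 : 2 ≤ p) (a : F) :
    (X ^ p - X - C a : F[X]).degree = p := by
  have h : (X ^ p - X - C a : F[X]) = X ^ p - (X + C a) := by ring
  rw [h, degree_sub_eq_left_of_degree_lt, degree_X_pow]
  rw [degree_X_pow]
  refine lt_of_le_of_lt (degree_add_le _ _) ?_
  rw [max_lt_iff]
  constructor
  · exact lt_of_le_of_lt (degree_X_le (R := F)) (by exact_mod_cast (by omega : 1 < p))
  · exact lt_of_le_of_lt (degree_C_le) (by exact_mod_cast (by omega : 0 < p))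

theorem artinSchreier_minpoly_natDegree {k l : Type*} [Field k] [Field l] [Algebra k l]
    (p : ℕ) [Fact p.Prime] [CharP k p] (a : k) (hnot : ∀ c : k, c ^ p - c ≠ a)
    {y : l} (hy : y ^ p - y = algebraMap k l a) : (minpoly k y).natDegree = p := by
  have pprime : p.Prime := Fact.out
  have hp2 : 2 ≤ p := pprime.two_le
  haveI : CharP l p := charP_of_injective_algebraMap (algebraMap k l).injective p
  haveI : ExpChar l p := ExpChar.prime (Fact.out)
  set f : k[X] := X ^ p - X - C a with hf
  have hmf : f.Monic := AS_monic hp2 a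
  have hfd : f.natDegree = p := natDegree_eq_of_degree_eq_some (AS_degree hp2 a)
  have hroot : Polynomial.aeval y f = 0 := by
    simp only [hf, map_sub, map_pow, aeval_X, aeval_C]
    rw [hy]; ring
  have hint : IsIntegral k y := ⟨f, hmf, by simpa [Polynomial.aeval_def] using hroot⟩
  set g : k[X] := minpoly k y with hg
  have hgmonic : g.Monic := minpoly.monic hint
  have hgdvd : g ∣ f := minpoly.dvd k y hroot
  have hd_le : g.natDegree ≤ p := hfd ▸ natDegree_le_of_dvd hgdvd hmf.ne_zero
  have hd_pos : 0 < g.natDegree := minpoly.natDegree_pos hint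
  rcases eq_or_lt_of_le hd_le with h | hlt
  · exact h
  exfalso
  set φ := algebraMap k l with hφ
  set d := g.natDegree with hdd
  -- the mapped polynomial
  set gl : l[X] := g.map φ with hgl
  have hglm : gl.Monic := hgmonic.map φ
  have hgld : gl.natDegree = d := natDegree_map φ
  -- f maps to a product of linear factors
  have hyp : y ^ p = y + φ a := by rw [← hy]; ring
  have hflprod : f.map φ = ∏ t : ZMod p, (X - C (y + (ZMod.castHom (dvd_refl p) l) t)) := by
    have h1 := congrArg (Polynomial.aeval (X - C y : l[X])) (zmod_prod_eq p l)
    rw [map_prod] at h1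
    simp only [map_sub, aeval_X, aeval_C, map_pow, Polynomial.algebraMap_eq] at h1
    have h2 : ((X : l[X]) - C y) ^ p = X ^ p - C y ^ p := sub_pow_char _ _
    rw [h2] at h1
    have h3 : f.map φ = X ^ p - X - C (φ a) := by
      simp [hf, Polynomial.map_sub, Polynomial.map_pow]
    have heq : (X : l[X]) ^ p - X - C (φ a) = X ^ p - C y ^ p - (X - C y) := by
      rw [← map_pow, ← hy, map_sub]; ring
    rw [h3, heq, ← h1]
    refine Finset.prod_congr rfl fun t _ => ?_
    rw [map_add]; ring
  have hflsplits : (f.map φ).Splits := by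
    rw [hflprod]
    exact Splits.prod fun t _ => Splits.X_sub_C _
  have hfl_ne : f.map φ ≠ 0 := (hmf.map φ).ne_zero
  have hgldvd : gl ∣ f.map φ := Polynomial.map_dvd φ hgdvd
  have hglsplits : gl.Splits :=
    Splits.of_dvd hflsplits hfl_ne hgldvd
  set R : Multiset l := gl.roots with hR
  have hcard : Multiset.card R = d := (splits_iff_card_roots.mp hglsplits).trans hgld
  -- every root r of gl satisfies (r - y)^p = r - y
  have hfix : ∀ r ∈ R, (r - y) ^ p = r - y := by
    intro r hr
    have hr0 : gl.eval r = 0 := isRoot_of_mem_roots hr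
    obtain ⟨q, hq⟩ := hgldvd
    have : (f.map φ).eval r = 0 := by rw [hq, eval_mul, hr0, zero_mul]
    have h3 : f.map φ = X ^ p - X - C (φ a) := by
      simp [hf, Polynomial.map_sub, Polynomial.map_pow]
    rw [h3] at this
    simp only [eval_sub, eval_pow, eval_X, eval_C] at this
    have hrp : r ^ p = r + φ a := by linear_combination this
    rw [sub_pow_char, hrp, hyp]; ring
  set s : l := (R.map (fun r => r - y)).sum with hs
  have hsfix : s ^ p = s := by
    rw [hs, multiset_sum_pow_char, Multiset.map_map]
    congr 1
    exact Multiset.map_congr rfl fun r hr => hfix r hr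
  -- sum of roots
  have hsum : R.sum = s + d • y := by
    have h1 : R.sum = (R.map (fun r => (r - y) + y)).sum := by
      congr 1
      rw [show (fun r : l => (r - y) + y) = id by funext r; simp]
      simp
    rw [h1, Multiset.sum_map_add, ← hs]
    congr 1
    rw [Multiset.map_const', Multiset.sum_replicate, hcard]
  have hnext : gl.nextCoeff = -R.sum := hglsplits.nextCoeff_eq_neg_sum_roots_of_monic hglm
  have hnextmap : gl.nextCoeff = φ g.nextCoeff := nextCoeff_map (algebraMap k l).injective g
  -- s is in the prime field
  obtain ⟨t₀, hst⟩ : ∃ t₀ : ZMod p, s = (ZMod.castHom (dvd_refl p) l) t₀ := by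
    have h1 := congrArg (Polynomial.eval s) (zmod_prod_eq p l)
    rw [eval_prod] at h1
    simp only [eval_sub, eval_X, eval_C, eval_pow] at h1
    rw [hsfix, sub_self] at h1
    obtain ⟨t₀, -, ht₀⟩ := Finset.prod_eq_zero_iff.mp h1
    exact ⟨t₀, by linear_combination ht₀⟩
  -- solve for y
  have hdl : (d : l) ≠ 0 := by
    rw [Ne, CharP.cast_eq_zero_iff l p d]
    exact fun hdvd => absurd (Nat.le_of_dvd hd_pos hdvd) (not_le.mpr hlt)
  set c : k := (-(g.nextCoeff) - (ZMod.castHom (dvd_refl p) k) t₀) / (d : k) with hc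
  have hcasts : φ ((ZMod.castHom (dvd_refl p) k) t₀) = (ZMod.castHom (dvd_refl p) l) t₀ := by
    have : φ.comp (ZMod.castHom (dvd_refl p) k) = ZMod.castHom (dvd_refl p) l :=
      RingHom.ext_zmod _ _
    exact RingHom.congr_fun this t₀
  have hyc : φ c = y := by
    have h1 : s + (d : l) * y = -(φ g.nextCoeff) := by
      rw [← hnextmap, hnext, hsum]; push_cast [nsmul_eq_mul]; ring
    rw [hc, map_div₀, map_sub, map_neg, map_natCast, hcasts]
    rw [div_eq_iff hdl]
    rw [← hst]
    linear_combination -h1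
  refine hnot c ?_
  have h2 : φ (c ^ p - c) = φ a := by
    rw [map_sub, map_pow, hyc, hy]
  exact (algebraMap k l).injective h2

/-- Let `K` be a discrete valued field of characteristic `p` with
valuation `v` (value group `ℤ`), valuation ring `O_K`, residue field `k` (given by a
surjection `resK : O_K → k` with kernel `m_K`).  Let `α ∈ O_K` be optimal with
`v(α) = 0` such that `X^p − X − α` is irreducible, and let `L = K[x]/(x^p − x − α)`
with a valuation `w` extending `v`, valuation ring `O_L` and residue field `l`.
Then `ᾱ ∉ 𝒫(k)`, and `L/K` is unramified: the value group of `L` is still `ℤ`, and the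
residue extension `l/k` is separable of degree `p`, generated by a root `ȳ` of
`ȳ^p − ȳ − ᾱ`. -/
theorem artinSchreier_unramified
    {K L : Type*} [Field K] [Field L] [Algebra K L]
    (p : ℕ) [Fact p.Prime] [CharP K p]
    (v : K → WithTop ℤ)
    (hv0 : v 0 = ⊤) (hv1 : v 1 = 0)
    (hvmul : ∀ x y : K, v (x * y) = v x + v y)
    (hvadd : ∀ x y : K, min (v x) (v y) ≤ v (x + y))
    (hvsurj : ∀ j : ℤ, ∃ x : K, v x = (j : WithTop ℤ))
    (OK : Subring K) (hOK : ∀ x : K, x ∈ OK ↔ 0 ≤ v x)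
    {k : Type*} [Field k] (resK : OK →+* k)
    (hresKsurj : Function.Surjective resK)
    (hresKker : ∀ x : OK, resK x = 0 ↔ 0 < v (x : K))
    (α : OK) (hval : v (α : K) = 0)
    (hopt : ∀ γ : K, v ((α : K) + (γ ^ p - γ)) ≤ v (α : K))
    (hirr : Irreducible (Polynomial.X ^ p - Polynomial.X
      - Polynomial.C (α : K) : Polynomial K))
    (x : L) (hx : x ^ p - x = algebraMap K L (α : K))
    (hgen : Algebra.adjoin K {x} = ⊤) (hdeg : Module.finrank K L = p)
    (w : L → WithTop ℚ)
    (hw0 : w 0 = ⊤) (hw1 : w 1 = 0)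
    (hwmul : ∀ x y : L, w (x * y) = w x + w y)
    (hwadd : ∀ x y : L, min (w x) (w y) ≤ w (x + y))
    (hcomp : ∀ y : K, w (algebraMap K L y) = WithTop.map (fun j : ℤ => (j : ℚ)) (v y))
    (OL : Subring L) (hOL : ∀ y : L, y ∈ OL ↔ 0 ≤ w y)
    {l : Type*} [Field l] (resL : OL →+* l)
    (hresLsurj : Function.Surjective resL)
    (hresLker : ∀ y : OL, resL y = 0 ↔ 0 < w (y : L))
    [Algebra k l]
    (hrescomp : ∀ (y : OK) (hy : algebraMap K L (y : K) ∈ OL),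
      algebraMap k l (resK y) = resL ⟨algebraMap K L (y : K), hy⟩) :
    -- `ᾱ ∉ 𝒫(k)`
    (∀ c : k, c ^ p - c ≠ resK α) ∧
    -- the value group of `L` equals `Γ_K = ℤ`
    (∀ q : ℚ, (∃ y : L, y ≠ 0 ∧ w y = (q : WithTop ℚ)) ↔ ∃ j : ℤ, q = (j : ℚ)) ∧
    -- the residue extension is `l = k[ȳ]/(ȳ^p − ȳ − ᾱ)`, separable of degree `p`
    Algebra.IsSeparable k l ∧ Module.finrank k l = p ∧
    (∃ ybar : l, ybar ^ p - ybar = algebraMap k l (resK α) ∧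
      Algebra.adjoin k {ybar} = ⊤) := by
  classical
  have pprime : p.Prime := Fact.out
  have hp2 : 2 ≤ p := pprime.two_le
  have h2q : (2 : ℚ) ≤ (p : ℚ) := by exact_mod_cast hp2
  -- characteristic of k
  have hpk : (p : k) = 0 := by
    have h1 : ((p : OK) : K) = 0 := by push_cast; exact CharP.cast_eq_zero K p
    have h2 : (p : OK) = 0 := Subtype.ext (by simpa using h1)
    calc (p : k) = resK (p : OK) := (map_natCast resK p).symm
      _ = 0 := by rw [h2, map_zero]
  haveI hck : CharP k p := by
    have h := CharP.ringChar_of_prime_eq_zero pprime hpk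
    have h2 := ringChar.charP k
    rwa [h] at h2
  -- valuation facts
  have vtop : ∀ {a : K}, a ≠ 0 → v a ≠ ⊤ := fun ha => val_ne_top v hv1 hvmul ha
  have wneg := val_neg w hw1 hwmul
  have wmin : ∀ {a b : L}, w a ≠ w b → w (a + b) = min (w a) (w b) :=
    fun {a b} h => val_add_eq_min w hw1 hwmul hwadd h
  have wpow0 : ∀ {a : L}, w a = 0 → ∀ n : ℕ, w (a ^ n) = 0 :=
    fun {a} ha n => val_pow_zero w hw1 hwmul ha n
  have hwα : w (algebraMap K L (α : K)) = 0 := by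
    rw [hcomp, hval, ← WithTop.coe_zero, WithTop.map_coe]
    norm_num
  -- w x = 0
  have hwx : w x = 0 := by
    rcases lt_trichotomy (w x) 0 with hneg | h0 | hpos
    · exfalso
      obtain ⟨q, hq⟩ := WithTop.ne_top_iff_exists.mp hneg.ne_top
      have hqneg : q < 0 := by
        rw [← hq, ← WithTop.coe_zero, WithTop.coe_lt_coe] at hneg
        exact hneg
      have hpowv : ∀ n : ℕ, w (x ^ n) = (((n : ℚ) * q : ℚ) : WithTop ℚ) := by
        intro n
        induction n with
        | zero => simpa using hw1
        | succ n ih =>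
          rw [pow_succ, hwmul, ih, ← hq, ← WithTop.coe_add, WithTop.coe_inj]
          push_cast
          ring
      have hne : w (x ^ p) ≠ w (-x) := by
        rw [hpowv p, wneg, ← hq]
        intro hcontra
        rw [WithTop.coe_inj] at hcontra
        nlinarith [h2q, hqneg]
      have h2 : w (x ^ p - x) = min (w (x ^ p)) (w (-x)) := by
        rw [sub_eq_add_neg]; exact wmin hne
      rw [hx, hwα, hpowv p, wneg, ← hq] at h2
      have h3 : min (((p : ℚ) * q : ℚ) : WithTop ℚ) ((q : ℚ) : WithTop ℚ)
          = (((p : ℚ) * q : ℚ) : WithTop ℚ) := by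
        refine min_eq_left (WithTop.coe_le_coe.mpr ?_)
        nlinarith [h2q, hqneg]
      rw [h3] at h2
      rw [← WithTop.coe_zero, WithTop.coe_inj] at h2
      nlinarith [h2q, hqneg, h2]
    · exact h0
    · exfalso
      have hxp : (0 : WithTop ℚ) < w (x ^ p) := by
        have hstep : ∀ n : ℕ, 0 < w (x ^ (n + 1)) := by
          intro n
          induction n with
          | zero => simpa using hpos
          | succ n ih =>
            rw [pow_succ, hwmul]
            calc (0 : WithTop ℚ) < w (x ^ (n + 1)) := ih
              _ = w (x ^ (n + 1)) + 0 := (add_zero _).symm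
              _ ≤ w (x ^ (n + 1)) + w x := add_le_add_right hpos.le _
        have h := hstep (p - 1)
        rwa [Nat.sub_add_cancel (by omega)] at h
      have h2 : (0 : WithTop ℚ) < w (x ^ p - x) := by
        rw [sub_eq_add_neg]
        refine lt_of_lt_of_le (lt_min hxp (by rwa [wneg])) (hwadd _ _)
      rw [hx, hwα] at h2
      exact lt_irrefl _ h2
  have hxO : x ∈ OL := (hOL x).2 hwx.ge
  set xO : OL := ⟨x, hxO⟩ with hxOdef
  have hαmem : algebraMap K L ((α : OK) : K) ∈ OL := (hOL _).2 (by rw [hwα])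
  set ybar : l := resL xO with hybardef
  have hybar : ybar ^ p - ybar = algebraMap k l (resK α) := by
    rw [hrescomp α hαmem, hybardef, ← map_pow, ← map_sub]
    congr 1
    exact Subtype.ext (by push_cast [hxOdef]; exact hx)
  -- Part 1 : residue of α is not in 𝒫(k)
  have hnotP : ∀ c : k, c ^ p - c ≠ resK α := by
    intro c hc
    obtain ⟨γ, hγ⟩ := hresKsurj c
    set δ : OK := α - (γ ^ p - γ) with hδ
    have h1 : 0 < v ((δ : OK) : K) :=
      (hresKker δ).1 (by rw [hδ, map_sub, map_sub, map_pow, hγ, hc]; ring)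
    have h2 : v ((δ : OK) : K) ≤ 0 := by
      have h3 := hopt (-(γ : K))
      rw [hval] at h3
      have h4 : ((α : OK) : K) + ((-(γ : K)) ^ p - (-(γ : K))) = ((δ : OK) : K) := by
        have h5 : (-(γ : K)) ^ p = -((γ : K) ^ p) := by
          rw [neg_pow, neg_one_pow_char K p]; ring
        rw [h5, hδ]; push_cast; ring
      rwa [h4] at h3
    exact absurd h1 (not_lt.mpr h2)
  -- minpoly of ybar
  have hymind : (minpoly k ybar).natDegree = p :=
    artinSchreier_minpoly_natDegree p (resK α) hnotP hybar
  have hyroot : Polynomial.aeval ybar (X ^ p - X - C (resK α) : k[X]) = 0 := by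
    simp only [map_sub, map_pow, aeval_X, aeval_C]
    linear_combination hybar
  have hyint : IsIntegral k ybar :=
    ⟨_, AS_monic hp2 (resK α), by simpa [Polynomial.aeval_def] using hyroot⟩
  -- minpoly of x over K
  have hfkmonic : (X ^ p - X - C ((α : OK) : K) : K[X]).Monic := AS_monic hp2 _
  have hfkdeg : (X ^ p - X - C ((α : OK) : K) : K[X]).degree = p := AS_degree hp2 _
  have hrootx : Polynomial.aeval x (X ^ p - X - C ((α : OK) : K) : K[X]) = 0 := by
    simp only [map_sub, map_pow, aeval_X, aeval_C]
    linear_combination hx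
  -- representation of elements of L
  have hrep : ∀ y : L, ∃ Q : Polynomial K, Q.natDegree < p ∧ Polynomial.aeval x Q = y := by
    intro y
    have hmem : y ∈ Algebra.adjoin K {x} := by rw [hgen]; trivial
    rw [Algebra.adjoin_singleton_eq_range_aeval] at hmem
    obtain ⟨P, hP⟩ := hmem
    refine ⟨P %ₘ (X ^ p - X - C ((α : OK) : K)), ?_, ?_⟩
    · by_cases hz : P %ₘ (X ^ p - X - C ((α : OK) : K)) = 0
      · rw [hz]; simpa using (by omega : 0 < p)
      · rw [natDegree_lt_iff_degree_lt hz]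
        have h := degree_modByMonic_lt P hfkmonic
        rwa [hfkdeg] at h
    · rw [aeval_modByMonic_eq_self_of_root hrootx]
      exact hP
  -- basic w facts on powers of x and membership
  have hwxi : ∀ i : ℕ, w (x ^ i) = 0 := wpow0 hwx
  have hmapge : ∀ {t : WithTop ℤ}, 0 ≤ t →
      (0 : WithTop ℚ) ≤ WithTop.map (fun j : ℤ => (j : ℚ)) t := by
    intro t ht
    cases t with
    | top => simp
    | coe t =>
      rw [WithTop.map_coe]
      rw [← WithTop.coe_zero, WithTop.coe_le_coe] at ht ⊢
      exact_mod_cast ht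
  have hmemterm : ∀ (b : OK) (i : ℕ), algebraMap K L ((b : OK) : K) * x ^ i ∈ OL := by
    intro b i
    rw [hOL, hwmul, hwxi, add_zero, hcomp]
    exact hmapge ((hOK _).1 b.2)
  have hmem1 : ∀ b : OK, algebraMap K L ((b : OK) : K) ∈ OL := by
    intro b
    simpa using hmemterm b 0
  -- sums of the form Σ b_i x^i and their residues
  have hsumO : ∀ b : ℕ → OK,
      ∃ hm : (∑ i ∈ Finset.range p, algebraMap K L ((b i : OK) : K) * x ^ i) ∈ OL,
        resL ⟨∑ i ∈ Finset.range p, algebraMap K L ((b i : OK) : K) * x ^ i, hm⟩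
          = ∑ i ∈ Finset.range p, algebraMap k l (resK (b i)) * ybar ^ i := by
    intro b
    have hm : (∑ i ∈ Finset.range p, algebraMap K L ((b i : OK) : K) * x ^ i) ∈ OL :=
      Subring.sum_mem _ (fun i _ => hmemterm (b i) i)
    refine ⟨hm, ?_⟩
    have hTeq : (⟨∑ i ∈ Finset.range p, algebraMap K L ((b i : OK) : K) * x ^ i, hm⟩ : OL)
        = ∑ i ∈ Finset.range p,
            (⟨algebraMap K L ((b i : OK) : K), hmem1 (b i)⟩ : OL) * xO ^ i := by
      apply Subtype.ext
      simp only [AddSubmonoidClass.coe_finset_sum, MulMemClass.coe_mul, SubmonoidClass.coe_pow]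
      rfl
    rw [hTeq, map_sum]
    refine Finset.sum_congr rfl fun i _ => ?_
    rw [map_mul, map_pow, ← hrescomp (b i) (hmem1 (b i))]
  -- the key valuation computation
  have hkey : ∀ Q : Polynomial K, Q.natDegree < p → Q ≠ 0 →
      ∃ j : ℤ, w (Polynomial.aeval x Q) = (((j : ℚ)) : WithTop ℚ) ∧
        (∀ i : ℕ, ((j : ℤ) : WithTop ℤ) ≤ v (Q.coeff i)) := by
    intro Q hQd hQ0
    set m : WithTop ℤ := (Finset.range p).inf (fun i => v (Q.coeff i)) with hm
    have hlead : Q.natDegree ∈ Finset.range p := Finset.mem_range.mpr hQd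
    have hmne : m ≠ ⊤ := by
      intro htop
      have h1 : m ≤ v (Q.coeff Q.natDegree) := Finset.inf_le hlead
      rw [htop, top_le_iff] at h1
      exact vtop (Polynomial.leadingCoeff_ne_zero.mpr hQ0) h1
    obtain ⟨j, hj⟩ := WithTop.ne_top_iff_exists.mp hmne
    obtain ⟨i₀, hi₀mem, hi₀⟩ := Finset.exists_mem_eq_inf (Finset.range p)
      (by rw [Finset.nonempty_range_iff]; omega) (fun i => v (Q.coeff i))
    obtain ⟨c, hc⟩ := hvsurj (-j)
    have hc0 : c ≠ 0 := by
      intro h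
      rw [h, hv0] at hc
      exact WithTop.top_ne_coe hc
    have hcoeffge : ∀ i : ℕ, ((j : ℤ) : WithTop ℤ) ≤ v (Q.coeff i) := by
      intro i
      by_cases hip : i ∈ Finset.range p
      · rw [hj]; exact Finset.inf_le hip
      · have hzero : Q.coeff i = 0 := Q.coeff_eq_zero_of_natDegree_lt
          (by rw [Finset.mem_range] at hip; omega)
        rw [hzero, hv0]; exact le_top
    have hbmem : ∀ i : ℕ, 0 ≤ v (c * Q.coeff i) := by
      intro i
      rw [hvmul, hc]
      calc (0 : WithTop ℤ) = ((-j : ℤ) : WithTop ℤ) + ((j : ℤ) : WithTop ℤ) := by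
            rw [← WithTop.coe_add]; simp
        _ ≤ ((-j : ℤ) : WithTop ℤ) + v (Q.coeff i) := add_le_add_right (hcoeffge i) _
    set b : ℕ → OK := fun i => ⟨c * Q.coeff i, (hOK _).2 (hbmem i)⟩ with hb
    obtain ⟨hm2, hres⟩ := hsumO b
    have hu : (∑ i ∈ Finset.range p, algebraMap K L ((b i : OK) : K) * x ^ i)
        = algebraMap K L c * Polynomial.aeval x Q := by
      rw [Polynomial.aeval_eq_sum_range' hQd, Finset.mul_sum]
      refine Finset.sum_congr rfl fun i _ => ?_
      rw [Algebra.smul_def]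
      show algebraMap K L (c * Q.coeff i) * x ^ i = _
      rw [map_mul]; ring
    have hvb : v ((b i₀ : OK) : K) = 0 := by
      show v (c * Q.coeff i₀) = 0
      have hvq : v (Q.coeff i₀) = ((j : ℤ) : WithTop ℤ) := hi₀.symm.trans hj.symm
      rw [hvmul, hc, hvq, ← WithTop.coe_add]
      simp
    have hresne : resL ⟨∑ i ∈ Finset.range p, algebraMap K L ((b i : OK) : K) * x ^ i, hm2⟩ ≠ 0 := by
      rw [hres]
      intro hzero
      set Rp : Polynomial k := ∑ i ∈ Finset.range p, C (resK (b i)) * X ^ i with hRp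
      have haevalR : Polynomial.aeval ybar Rp
          = ∑ i ∈ Finset.range p, algebraMap k l (resK (b i)) * ybar ^ i := by
        rw [hRp, map_sum]
        refine Finset.sum_congr rfl fun i _ => ?_
        rw [map_mul, map_pow, aeval_C, aeval_X]
      have hRcoeff : Rp.coeff i₀ = resK (b i₀) := by
        rw [hRp, finset_sum_coeff]
        simp only [coeff_C_mul, coeff_X_pow, mul_ite, mul_one, mul_zero]
        rw [Finset.sum_ite_eq (Finset.range p) i₀ (fun i => resK (b i))]
        simp [hi₀mem]
      have hRne : resK (b i₀) ≠ 0 := by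
        intro h
        have := (hresKker _).1 h
        rw [hvb] at this
        exact lt_irrefl _ this
      have hR0 : Rp ≠ 0 := fun h => hRne (by rw [← hRcoeff, h, coeff_zero])
      have hRdeg : Rp.degree < (minpoly k ybar).degree := by
        have h1 : Rp.degree < (p : WithBot ℕ) := by
          rw [hRp]
          refine lt_of_le_of_lt (degree_sum_le _ _) ?_
          rw [Finset.sup_lt_iff (by exact_mod_cast WithBot.bot_lt_coe p)]
          intro i hi
          refine lt_of_le_of_lt (degree_C_mul_X_pow_le i _) ?_
          exact_mod_cast Finset.mem_range.mp hi
        have h2 : (minpoly k ybar).degree = (p : WithBot ℕ) := by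
          rw [degree_eq_natDegree (minpoly.ne_zero hyint), hymind]
        rw [h2]; exact h1
      exact absurd (minpoly.degree_le_of_ne_zero k ybar hR0 (by rw [haevalR, hzero]))
        (not_le.mpr hRdeg)
    have hwuge : (0 : WithTop ℚ) ≤ w (∑ i ∈ Finset.range p, algebraMap K L ((b i : OK) : K) * x ^ i) :=
      (hOL _).1 hm2
    have hwu : w (∑ i ∈ Finset.range p, algebraMap K L ((b i : OK) : K) * x ^ i) = 0 := by
      refine le_antisymm ?_ hwuge
      by_contra hcon
      exact hresne ((hresLker _).2 (not_le.mp hcon))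
    have hwc : w (algebraMap K L c) = (((-j : ℤ) : ℚ) : WithTop ℚ) := by
      rw [hcomp, hc, WithTop.map_coe]
    refine ⟨j, ?_, hcoeffge⟩
    have h5 : w (algebraMap K L c) + w (Polynomial.aeval x Q) = 0 := by
      rw [← hwmul, ← hu, hwu]
    rw [hwc] at h5
    cases hwq : w (Polynomial.aeval x Q) with
    | top => rw [hwq, add_top] at h5; exact absurd h5 (by simp)
    | coe t =>
      rw [hwq, ← WithTop.coe_add, ← WithTop.coe_zero, WithTop.coe_inj] at h5
      rw [WithTop.coe_inj]
      push_cast at h5 ⊢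
      linarith
  -- adjoin k {ybar} = ⊤
  have htop : Algebra.adjoin k {ybar} = ⊤ := by
    rw [eq_top_iff]
    rintro z -
    obtain ⟨zO, rfl⟩ := hresLsurj z
    obtain ⟨Q, hQd, hQa⟩ := hrep (zO : L)
    by_cases hQ0 : Q = 0
    · have hz : zO = 0 := Subtype.ext (by rw [← hQa, hQ0, map_zero]; simp)
      rw [hz, map_zero]
      exact Subalgebra.zero_mem _
    obtain ⟨j, hwj, hge⟩ := hkey Q hQd hQ0
    have hj0 : (0 : ℤ) ≤ j := by
      have h1 : (0 : WithTop ℚ) ≤ w ((zO : OL) : L) := (hOL _).1 zO.2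
      rw [← hQa, hwj, ← WithTop.coe_zero, WithTop.coe_le_coe] at h1
      exact_mod_cast h1
    set b : ℕ → OK := fun i => ⟨Q.coeff i, (hOK _).2
      (le_trans (by exact_mod_cast hj0 : (0 : WithTop ℤ) ≤ ((j : ℤ) : WithTop ℤ)) (hge i))⟩ with hb
    obtain ⟨hm2, hres⟩ := hsumO b
    have hsum_eq : (∑ i ∈ Finset.range p, algebraMap K L ((b i : OK) : K) * x ^ i) = (zO : L) := by
      rw [← hQa, Polynomial.aeval_eq_sum_range' hQd]
      exact Finset.sum_congr rfl fun i _ => (Algebra.smul_def _ _).symm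
    have hzeq : zO = ⟨∑ i ∈ Finset.range p, algebraMap K L ((b i : OK) : K) * x ^ i, hm2⟩ :=
      Subtype.ext hsum_eq.symm
    rw [hzeq, hres]
    exact Subalgebra.sum_mem _ fun i _ => Subalgebra.mul_mem _
      (Subalgebra.algebraMap_mem _ _)
      (Subalgebra.pow_mem _ (Algebra.self_mem_adjoin_singleton k ybar) _)
  have hIF : IntermediateField.adjoin k {ybar} = ⊤ := by
    have h := IntermediateField.algebra_adjoin_le_adjoin k {ybar}
    rw [htop] at h
    apply IntermediateField.toSubalgebra_injective
    rw [IntermediateField.top_toSubalgebra]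
    exact le_antisymm le_top h
  have hfinrank : Module.finrank k l = p := by
    have h1 := IntermediateField.adjoin.finrank hyint
    rw [hymind] at h1
    rw [← IntermediateField.finrank_top' (F := k) (E := l), ← hIF]
    exact h1
  have hsep : Algebra.IsSeparable k l := by
    have hdvd : minpoly k ybar ∣ (X ^ p - X - C (resK α) : k[X]) := minpoly.dvd k ybar hyroot
    have hsepf : (X ^ p - X - C (resK α) : k[X]).Separable := by
      have hder : Polynomial.derivative (X ^ p - X - C (resK α) : k[X]) = -1 := by
        simp [Polynomial.derivative_X_pow, CharP.cast_eq_zero k p]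
      rw [Polynomial.separable_def, hder]
      exact (isCoprime_one_right).neg_right
    have hsepy : IsSeparable k ybar := hsepf.of_dvd hdvd
    have h2 : Algebra.IsSeparable k (IntermediateField.adjoin k {ybar}) :=
      (IntermediateField.isSeparable_adjoin_iff_isSeparable k l).2
        (by rintro z hz; rw [Set.mem_singleton_iff] at hz; rwa [hz])
    rw [hIF] at h2
    exact AlgEquiv.Algebra.isSeparable (IntermediateField.topEquiv (F := k) (E := l))
  have hvgroup : ∀ q : ℚ, (∃ y : L, y ≠ 0 ∧ w y = (q : WithTop ℚ)) ↔ ∃ j : ℤ, q = (j : ℚ) := by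
    intro q
    constructor
    · rintro ⟨y, hy0, hwy⟩
      obtain ⟨Q, hQd, hQa⟩ := hrep y
      have hQ0 : Q ≠ 0 := fun h => hy0 (by rw [← hQa, h, map_zero])
      obtain ⟨j, hwj, -⟩ := hkey Q hQd hQ0
      rw [hQa, hwy] at hwj
      exact ⟨j, by exact_mod_cast hwj⟩
    · rintro ⟨j, rfl⟩
      obtain ⟨c, hc⟩ := hvsurj j
      have hc0 : c ≠ 0 := by
        intro h
        rw [h, hv0] at hc
        exact WithTop.top_ne_coe hc
      refine ⟨algebraMap K L c, fun h => hc0 ((algebraMap K L).injective (by rw [h, map_zero])), ?_⟩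
      rw [hcomp, hc, WithTop.map_coe]
  exact ⟨hnotP, hvgroup, hsep, hfinrank, ybar, hybar, htop⟩
end

section
/- Let K be a discrete valued field of characteristic p with valuation v and α ∈ K optimal with v(α) < 0 and p | v(α). Write α = u/t^{m p^r} with u ∈ O_K^×, r > 0, gcd(m,p) = 1, t a uniformizer. Then the residue ū is not a p-th power in k. -/
/-- Let `K` be a discrete valued field of characteristic `p` with
residue field `k`, uniformizer `t` and value group `ℤ`.  Let `α ∈ K` be optimal with
`v(α) < 0` and `p ∣ v(α)`, and write `α = u/t^{m·p^r}` with `u ∈ O_K^×`, `r > 0` and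
`gcd(m, p) = 1`.  Then the residue `ū` is not a `p`-th power in `k`. -/
theorem optimal_residue_not_pth_power
    {K : Type*} [Field K] (p : ℕ) [Fact p.Prime] [CharP K p]
    (v : K → WithTop ℤ)
    (hv0 : v 0 = ⊤) (hv1 : v 1 = 0)
    (hvmul : ∀ x y : K, v (x * y) = v x + v y)
    (hvadd : ∀ x y : K, min (v x) (v y) ≤ v (x + y))
    (hvsurj : ∀ j : ℤ, ∃ x : K, v x = (j : WithTop ℤ))
    (OK : Subring K) (hOK : ∀ x : K, x ∈ OK ↔ 0 ≤ v x)
    {k : Type*} [Field k] (resK : OK →+* k)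
    (hresKsurj : Function.Surjective resK)
    (hresKker : ∀ x : OK, resK x = 0 ↔ 0 < v (x : K))
    (t : K) (ht : v t = (1 : ℤ))
    (α : K) (hneg : v α < 0)
    (hopt : ∀ γ : K, v (α + (γ ^ p - γ)) ≤ v α)
    (hdvd : ∃ N : ℤ, v α = (N : WithTop ℤ) ∧ (p : ℤ) ∣ N)
    (u : OK) (hu : IsUnit u) (m r : ℕ) (hr : 0 < r) (hm : Nat.gcd m p = 1)
    (hα : α = (u : K) / t ^ (m * p ^ r)) :
    ∀ c : k, c ^ p ≠ resK u := by
  intro c hc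
  have hp2 : 2 ≤ p := (Fact.out : p.Prime).two_le
  -- basic valuation facts
  have htne : t ≠ 0 := by
    intro h; rw [h, hv0] at ht; exact (WithTop.top_ne_coe) ht
  have hvpow : ∀ j : ℕ, v (t ^ j) = ((j : ℤ) : WithTop ℤ) := by
    intro j
    induction j with
    | zero => simpa using hv1
    | succ j ih =>
        rw [pow_succ, hvmul, ih, ht]
        push_cast
        rfl
  have hvinvpow : ∀ j : ℕ, v ((t ^ j)⁻¹) = ((-(j : ℤ)) : WithTop ℤ) := by
    intro j
    have h := hvmul (t ^ j) (t ^ j)⁻¹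
    rw [mul_inv_cancel₀ (pow_ne_zero j htne), hv1, hvpow] at h
    cases hvi : v ((t ^ j)⁻¹) with
    | top => rw [hvi] at h; simp at h
    | coe a =>
        rw [hvi] at h
        have ha : (j : ℤ) + a = 0 := by exact_mod_cast h.symm
        have : a = -(j : ℤ) := by linarith
        rw [this]; push_cast; ring
  have hvu : v (u : K) = 0 := by
    obtain ⟨w, hw⟩ := isUnit_iff_exists_inv.mp hu
    have h1 : (0 : WithTop ℤ) ≤ v (u : K) := (hOK _).mp u.2
    have h2 : (0 : WithTop ℤ) ≤ v (w : K) := (hOK _).mp w.2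
    have h3 : v ((u : K) * (w : K)) = 0 := by
      have huv : ((u * w : OK) : K) = 1 := by rw [hw]; rfl
      push_cast at huv
      rw [huv, hv1]
    rw [hvmul] at h3
    by_contra hne
    have hlt : 0 < v (u : K) := lt_of_le_of_ne h1 (Ne.symm hne)
    have hlt2 : (0 : WithTop ℤ) < v (u : K) + v (w : K) :=
      lt_of_lt_of_le hlt (le_add_of_nonneg_right h2)
    rw [h3] at hlt2; exact lt_irrefl _ hlt2
  set n : ℕ := m * p ^ r with hn
  set n' : ℕ := m * p ^ (r - 1) with hn'
  have hm1 : 1 ≤ m := by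
    rcases Nat.eq_zero_or_pos m with h | h
    · exfalso; rw [h] at hm; simp [Nat.gcd] at hm; omega
    · exact h
  have hn'n : n' < n := by
    have : p ^ (r-1) < p ^ r := Nat.pow_lt_pow_right hp2 (by omega)
    rw [hn', hn]
    exact (mul_lt_mul_iff_right₀ (by omega : 0 < m)).mpr this
  have hn'p : n' * p = n := by
    rw [hn', hn, mul_assoc, ← pow_succ, Nat.sub_add_cancel hr]
  have hvα : v α = ((-(n : ℤ)) : WithTop ℤ) := by
    rw [hα, div_eq_mul_inv, hvmul, hvu, hvinvpow, zero_add]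
  -- the residue lift
  obtain ⟨d, hd⟩ := hresKsurj c
  have hker : 0 < v ((u - d ^ p : OK) : K) := by
    rw [← hresKker, map_sub, map_pow, hd, ← hc, sub_self]
  have hd0 : (0 : WithTop ℤ) ≤ v (d : K) := (hOK _).mp d.2
  -- the element γ
  set γ : K := -((d : K) / t ^ n') with hγ
  have hγp : γ ^ p = -((d : K) ^ p / t ^ n) := by
    have hfr : (-((d : K) / t ^ n')) ^ p = -((d : K) ^ p / (t ^ n') ^ p) := by
      simpa [frobenius_def] using map_neg (frobenius K p) ((d : K) / t ^ n')
    rw [hγ, hfr, ← pow_mul, hn'p]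
  have hrewrite : α + (γ ^ p - γ) =
      (((u - d ^ p : OK) : K)) / t ^ n + (d : K) / t ^ n' := by
    have hcast : ((u - d ^ p : OK) : K) = (u : K) - (d : K) ^ p := by push_cast; ring
    rw [hα, hγp, hγ, hcast]
    have h4 : (t : K) ^ n ≠ 0 := pow_ne_zero _ htne
    have hn5 : (t : K) ^ n' ≠ 0 := pow_ne_zero _ htne
    field_simp
    ring
  have hbig : v α < v (α + (γ ^ p - γ)) := by
    rw [hrewrite, hvα]
    refine lt_of_lt_of_le ?_ (hvadd _ _)
    rw [lt_min_iff]
    constructor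
    · rw [div_eq_mul_inv, hvmul, hvinvpow]
      calc ((-(n : ℤ)) : WithTop ℤ) = 0 + (-(n : ℤ)) := (zero_add _).symm
        _ < v ((u - d ^ p : OK) : K) + (-(n : ℤ)) :=
            WithTop.add_lt_add_right WithTop.coe_ne_top hker
    · rw [div_eq_mul_inv, hvmul, hvinvpow]
      calc ((-(n : ℤ)) : WithTop ℤ) < ((-(n' : ℤ)) : WithTop ℤ) := by
            exact_mod_cast (by omega : -(n : ℤ) < -(n' : ℤ))
        _ = 0 + ((-(n' : ℤ)) : WithTop ℤ) := (zero_add _).symm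
        _ ≤ v (d : K) + ((-(n' : ℤ)) : WithTop ℤ) := add_le_add_left hd0 _
  exact absurd (hopt γ) (not_le.mpr hbig)
end

section
/- Let F be a discrete valued field of characteristic p, t a uniformizer, and suppose X satisfies X^p − X = (1/t^{p^l})(f(Z)^p − f(Z) − α₁^{p^N}) + α₂^{p^N} where f ∈ F^{{m,n}}[Z] is an {m,n}-special polynomial, m > n, l > m, N > m, and α₁, α₂ ∈ F. Then there exists g ∈ F^{{m−n−1, n}}[Z] such that Y := X − g(Z) satisfies Y^p − Y = h Z + η for some h ∈ F^{p^{m−n}} and η ∈ F^{p^{m−n−1}}; moreover for l sufficiently large, v(h) < min(0, v(η)). -/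
open Polynomial

/-- For non-negative integers `m, n`, a polynomial over a field `F` of characteristic `p`
is *{m,n}-special* if it has the form `c + Σ_{i=0}^n a_i Z^{p^i}` with `c` and all `a_i`
being `p^m`-th powers in `F` and some `a_i ≠ 0`. -/
def specialSet (F : Type*) [Field F] (p m n : ℕ) : Set (Polynomial F) :=
  {q | ∃ (c : F) (a : ℕ → F),
    (∃ y : F, c = y ^ p ^ m) ∧
    (∀ i ≤ n, ∃ y : F, a i = y ^ p ^ m) ∧
    (∃ i ≤ n, a i ≠ 0) ∧
    q = C c + ∑ i ∈ Finset.range (n + 1), C (a i) * X ^ p ^ i}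

/-- Let `F` be a discrete valued field of characteristic `p` with
uniformizer `t`, let `f ∈ F^{{m,n}}[Z]` with `m > n`, let `N > m` and `α₁, α₂ ∈ F`, and
let `Z` be transcendental over `F` in an integral domain extension `A`.  There is a
bound `l₀` such that: for any `l > m`, if `X ∈ A` satisfies
`X^p − X = (1/t^{p^l})·(f(Z)^p − f(Z) − α₁^{p^N}) + α₂^{p^N}`, then there exists
`g ∈ F^{{m−n−1, n}}[Z]` such that `Y := X − g(Z)` satisfies `Y^p − Y = h·Z + η`
for some `h ∈ F^{p^{m−n}}` and `η ∈ F^{p^{m−n−1}}`; moreover if `l ≥ l₀` (i.e. `l` is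
sufficiently large) then in addition `v(h) < 0` and `v(h) < v(η)`. -/
theorem special_reduction
    {F A : Type*} [Field F] [CommRing A] [IsDomain A] [Algebra F A]
    (p : ℕ) [Fact p.Prime] [CharP F p]
    (v : F → WithTop ℤ)
    (hv0 : v 0 = ⊤) (hv1 : v 1 = 0)
    (hvmul : ∀ x y : F, v (x * y) = v x + v y)
    (hvadd : ∀ x y : F, min (v x) (v y) ≤ v (x + y))
    (hvsurj : ∀ j : ℤ, ∃ x : F, v x = (j : WithTop ℤ))
    (t : F) (ht : v t = (1 : ℤ))
    (m n : ℕ) (hmn : n < m) (N : ℕ) (hN : m < N) (α₁ α₂ : F)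
    (f : Polynomial F) (hf : f ∈ specialSet F p m n)
    (Z : A) (hZ : Transcendental F Z) :
    ∃ l₀ : ℕ, ∀ l : ℕ, m < l → ∀ X : A,
      X ^ p - X = algebraMap F A (1 / t ^ p ^ l) *
          ((aeval Z f) ^ p - aeval Z f - algebraMap F A (α₁ ^ p ^ N))
        + algebraMap F A (α₂ ^ p ^ N) →
      ∃ g ∈ specialSet F p (m - n - 1) n, ∃ h η : F,
        (∃ y : F, h = y ^ p ^ (m - n)) ∧ (∃ y : F, η = y ^ p ^ (m - n - 1)) ∧
        (X - aeval Z g) ^ p - (X - aeval Z g)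
          = algebraMap F A h * Z + algebraMap F A η ∧
        (l₀ ≤ l → v h < 0 ∧ v h < v η) := by
  classical
  obtain ⟨c, a, ⟨y, hy⟩, ha, ⟨i0, hi0n, hi0ne⟩, hfeq⟩ := hf
  choose bf hbf using ha
  have hprime : p.Prime := Fact.out
  have hp2 : 2 ≤ p := hprime.two_le
  have hp0 : p ≠ 0 := by omega
  have hpp : ∀ i : ℕ, p ^ i ≠ 0 := fun i => pow_ne_zero i hp0
  haveI : ExpChar F p := .prime hprime
  haveI : CharP A p := charP_of_injective_algebraMap (algebraMap F A).injective p
  haveI : ExpChar A p := .prime hprime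
  have htne : t ≠ 0 := by
    intro h
    rw [h, hv0] at ht
    exact (WithTop.coe_ne_top (a := (1 : ℤ))).symm ht
  obtain ⟨M, hM⟩ : ∃ M, m = M + n + 1 := ⟨m - n - 1, by omega⟩
  have hMn1 : m - n - 1 = M := by omega
  have hMn : m - n = M + 1 := by omega
  -- power-juggling helpers
  have hppow : ∀ (x : F) (i j : ℕ), (x ^ p ^ i) ^ p ^ j = x ^ p ^ (i + j) := fun x i j => by
    rw [← pow_mul, ← pow_add]
  have hppow1 : ∀ (x : F) (i : ℕ), (x ^ p ^ i) ^ p = x ^ p ^ (i + 1) := fun x i => by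
    rw [← pow_mul, ← pow_succ]
  -- basic data
  obtain ⟨bb, hbb⟩ : ∃ bb : ℕ → F, ∀ i, bb i = if h : i ≤ n then bf i h else 0 :=
    ⟨_, fun _ => rfl⟩
  obtain ⟨ab, hab'⟩ : ∃ ab : ℕ → F, ∀ i, ab i = if i ≤ n then a i else 0 :=
    ⟨_, fun _ => rfl⟩
  have habn : ∀ i ≤ n, ab i = a i := fun i hi => by rw [hab' i, if_pos hi]
  have hab : ∀ i, ab i = bb i ^ p ^ m := by
    intro i
    by_cases h : i ≤ n
    · rw [hab' i, if_pos h, hbb i, dif_pos h]; exact hbf i h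
    · rw [hab' i, if_neg h, hbb i, dif_neg h, zero_pow (hpp m)]
  have hbbz : ∀ i, ¬ i ≤ n → bb i = 0 := fun i hi => by rw [hbb i, dif_neg hi]
  obtain ⟨D, hD⟩ : ∃ D : ℕ → F, ∀ j, D j = bb j ^ p ^ (n + 1 - j) - bb (j + 1) ^ p ^ (n - j) :=
    ⟨_, fun _ => rfl⟩
  obtain ⟨d, hd⟩ : ∃ d : ℕ → F, ∀ j, d j = D j ^ p ^ M := ⟨_, fun _ => rfl⟩
  obtain ⟨e0, he0⟩ : ∃ e0 : F, e0 = y ^ p ^ 1 - y - α₁ ^ p ^ (N - m) := ⟨_, rfl⟩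
  obtain ⟨e, he⟩ : ∃ e : F, e = e0 ^ p ^ M := ⟨_, rfl⟩
  obtain ⟨τ, hτ⟩ : ∃ τ : ℕ → F, ∀ s, τ s = (t ^ p ^ s)⁻¹ := ⟨_, fun _ => rfl⟩
  have hτne : ∀ s, τ s ≠ 0 := fun s => by
    rw [hτ s]; exact inv_ne_zero (pow_ne_zero _ htne)
  have hτpow : ∀ s j : ℕ, τ s ^ p ^ j = τ (s + j) := by
    intro s j
    rw [hτ, hτ, inv_pow, ← pow_mul, ← pow_add]
  have hτp : ∀ s : ℕ, τ s ^ p = τ (s + 1) := by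
    intro s
    have := hτpow s 1
    rwa [pow_one] at this
  -- the l-dependent coefficient data
  obtain ⟨GK, hGK⟩ : ∃ GK : ℕ → ℕ → F, ∀ l k, GK l k =
      ∑ i ∈ Finset.range (n + 1 - k), τ (l - 1 - i) * d (k + i) ^ p ^ k :=
    ⟨_, fun _ _ => rfl⟩
  obtain ⟨GC, hGC⟩ : ∃ GC : ℕ → F, ∀ l, GC l =
      ∑ j ∈ Finset.range (n + 1), τ (l - 1 - j) * e ^ p ^ (n - j) :=
    ⟨_, fun _ => rfl⟩
  obtain ⟨hh, hhh⟩ : ∃ hh : ℕ → F, ∀ l, hh l = GK l 0 - τ l * ab 0 := ⟨_, fun _ => rfl⟩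
  obtain ⟨et, het⟩ : ∃ et : ℕ → F, ∀ l, et l = α₂ ^ p ^ N + τ (l - n - 1) * e := ⟨_, fun _ => rfl⟩
  -- key scalar identity for the d's
  have hdj : ∀ j ≤ n, d j ^ p ^ (j + 1) = ab j ^ p - ab (j + 1) := by
    intro j hj
    rw [hd, hppow, hD, sub_pow_char_pow, hppow, hppow,
      show n + 1 - j + (M + (j + 1)) = m + 1 from by omega,
      show n - j + (M + (j + 1)) = m from by omega, hab, hab, hppow1]
  -- recursion for GK
  have hR1 : ∀ l, n + 2 ≤ l → ∀ k ≤ n, GK l k ^ p = GK l (k + 1) + τ l * (ab k ^ p - ab (k + 1)) := by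
    intro l hl k hk
    rw [hGK, sum_pow_char]
    have step1 : ∀ i ∈ Finset.range (n + 1 - k),
        (τ (l - 1 - i) * d (k + i) ^ p ^ k) ^ p = τ (l - i) * d (k + i) ^ p ^ (k + 1) := by
      intro i hi
      have hi' : i ≤ n - k := by have := Finset.mem_range.1 hi; omega
      rw [mul_pow, hτp, hppow1, show l - 1 - i + 1 = l - i from by omega]
    rw [Finset.sum_congr rfl step1]
    have hnk : n + 1 - k = (n - k) + 1 := by omega
    rw [hnk, Finset.sum_range_succ' (fun i => τ (l - i) * d (k + i) ^ p ^ (k + 1)) (n - k)]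
    have step2 : ∀ i ∈ Finset.range (n - k),
        τ (l - (i + 1)) * d (k + (i + 1)) ^ p ^ (k + 1)
          = τ (l - 1 - i) * d ((k + 1) + i) ^ p ^ (k + 1) := by
      intro i hi
      rw [show l - (i + 1) = l - 1 - i from by omega, show k + (i + 1) = (k + 1) + i from by omega]
    rw [Finset.sum_congr rfl step2]
    have hterm0 : τ (l - 0) * d (k + 0) ^ p ^ (k + 1) = τ l * (ab k ^ p - ab (k + 1)) := by
      rw [Nat.sub_zero, Nat.add_zero, hdj k hk]
    rw [hterm0, hGK]
    have : n + 1 - (k + 1) = n - k := by omega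
    rw [this]
  -- recursion for GC
  have hR2 : ∀ l, n + 2 ≤ l → GC l ^ p - GC l = τ l * (c ^ p - c - α₁ ^ p ^ N) - τ (l - n - 1) * e := by
    intro l hl
    have hgcp : GC l ^ p = ∑ j ∈ Finset.range (n + 1), τ (l - j) * e ^ p ^ (n + 1 - j) := by
      rw [hGC, sum_pow_char]
      refine Finset.sum_congr rfl fun j hj => ?_
      have hj' : j ≤ n := by have := Finset.mem_range.1 hj; omega
      rw [mul_pow, hτp, hppow1, show l - 1 - j + 1 = l - j from by omega,
        show n - j + 1 = n + 1 - j from by omega]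
    have hgc2 : GC l = ∑ j ∈ Finset.range (n + 1), τ (l - (j + 1)) * e ^ p ^ (n + 1 - (j + 1)) := by
      rw [hGC]
      refine Finset.sum_congr rfl fun j hj => ?_
      rw [show l - (j + 1) = l - 1 - j from by omega, show n + 1 - (j + 1) = n - j from by omega]
    rw [hgcp, hgc2, ← Finset.sum_sub_distrib,
      Finset.sum_range_sub' (fun j => τ (l - j) * e ^ p ^ (n + 1 - j)) (n + 1)]
    have h1 : τ (l - 0) * e ^ p ^ (n + 1 - 0) = τ l * (c ^ p - c - α₁ ^ p ^ N) := by
      rw [Nat.sub_zero, Nat.sub_zero]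
      congr 1
      rw [he, hppow, show M + (n + 1) = m from by omega, he0, sub_pow_char_pow,
        sub_pow_char_pow, hppow, hppow, show 1 + m = m + 1 from by omega,
        show N - m + m = N from by omega, hy, hppow1]
    have h2 : τ (l - (n + 1)) * e ^ p ^ (n + 1 - (n + 1)) = τ (l - n - 1) * e := by
      rw [Nat.sub_self, pow_zero, pow_one, show l - (n + 1) = l - n - 1 from by omega]
    rw [h1, h2]
  -- nonzero coefficient index
  obtain ⟨k0, hk0n, hk0ne, hk0max⟩ : ∃ k0, k0 ≤ n ∧ a k0 ≠ 0 ∧ ∀ j ≤ n, k0 < j → a j = 0 := by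
    have hne : ((Finset.range (n + 1)).filter (fun i => a i ≠ 0)).Nonempty :=
      ⟨i0, Finset.mem_filter.2 ⟨Finset.mem_range.2 (by omega), hi0ne⟩⟩
    obtain ⟨h1, h2⟩ := Finset.mem_filter.1 (Finset.max'_mem _ hne)
    refine ⟨((Finset.range (n + 1)).filter (fun i => a i ≠ 0)).max' hne,
      by have := Finset.mem_range.1 h1; omega, h2, fun j hj hgt => ?_⟩
    by_contra hne2
    have := Finset.le_max' ((Finset.range (n + 1)).filter (fun i => a i ≠ 0)) j
      (Finset.mem_filter.2 ⟨Finset.mem_range.2 (by omega), hne2⟩)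
    omega
  have hbbk0 : bb k0 ≠ 0 := by
    intro hz
    apply hk0ne
    rw [← habn k0 hk0n, hab, hz, zero_pow (hpp m)]
  have hbbgt : ∀ j, k0 < j → bb j = 0 := by
    intro j hj
    by_cases hjn : j ≤ n
    · have : ab j = 0 := by rw [habn j hjn]; exact hk0max j hjn hj
      rw [hab] at this
      exact pow_eq_zero_iff (hpp m) |>.1 this
    · exact hbbz j hjn
  have hdgt : ∀ j, k0 < j → d j = 0 := by
    intro j hj
    rw [hd, hD, hbbgt j hj, hbbgt (j + 1) (by omega), zero_pow (hpp _), zero_pow (hpp _),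
      sub_zero, zero_pow (hpp M)]
  have hdk0 : d k0 ≠ 0 := by
    rw [hd, hD, hbbgt (k0 + 1) (by omega), zero_pow (hpp _), sub_zero]
    exact pow_ne_zero _ (pow_ne_zero _ hbbk0)
  -- valuation helper lemmas
  have hcases : ∀ z : WithTop ℤ, z = ⊤ ∨ ∃ w : ℤ, z = (w : WithTop ℤ) := by
    intro z
    cases z with
    | top => exact Or.inl rfl
    | coe w => exact Or.inr ⟨w, rfl⟩
  have hvne : ∀ x : F, x ≠ 0 → v x ≠ ⊤ := by
    intro x hx htop
    have h1 := hvmul x x⁻¹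
    rw [mul_inv_cancel₀ hx, hv1, htop, WithTop.top_add] at h1
    exact (WithTop.top_ne_zero h1.symm)
  have hvint : ∀ x : F, x ≠ 0 → ∃ z : ℤ, v x = (z : WithTop ℤ) := by
    intro x hx
    rcases hcases (v x) with h | h
    · exact absurd h (hvne x hx)
    · exact h
  have hvneg : ∀ x : F, v (-x) = v x := by
    have h1 : v (-1 : F) = 0 := by
      have h2 := hvmul (-1 : F) (-1)
      rw [neg_mul_neg, one_mul, hv1] at h2
      rcases hcases (v (-1 : F)) with hvx | ⟨z, hvx⟩
      · rw [hvx, WithTop.top_add] at h2; exact absurd h2.symm WithTop.top_ne_zero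
      · rw [hvx, ← WithTop.coe_add, ← WithTop.coe_zero] at h2
        have h3 : (0 : ℤ) = z + z := WithTop.coe_injective h2
        have h4 : z = 0 := by omega
        rw [hvx, h4, WithTop.coe_zero]
    intro x
    rw [neg_eq_neg_one_mul, hvmul, h1, zero_add]
  have hvt_pow : ∀ s : ℕ, v (t ^ s) = ((s : ℤ) : WithTop ℤ) := by
    intro s
    induction s with
    | zero => rw [pow_zero, hv1]; norm_num
    | succ s ih =>
      rw [pow_succ, hvmul, ih, ht, ← WithTop.coe_add]
      norm_num
  have hvτ : ∀ s : ℕ, v (τ s) = ((-((p : ℤ) ^ s) : ℤ) : WithTop ℤ) := by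
    intro s
    have h1 := hvmul (t ^ p ^ s) (τ s)
    rw [hτ, mul_inv_cancel₀ (pow_ne_zero _ htne), hv1, ← hτ, hvt_pow] at h1
    rcases hcases (v (τ s)) with hvx | ⟨z, hvx⟩
    · rw [hvx, WithTop.add_top] at h1; exact absurd h1.symm WithTop.top_ne_zero
    · rw [hvx, ← WithTop.coe_add, ← WithTop.coe_zero] at h1
      have h2 : (0 : ℤ) = (p ^ s : ℕ) + z := WithTop.coe_injective h1
      have h3 : z = -((p : ℤ) ^ s) := by push_cast at h2; omega
      rw [hvx, h3]
  have hvdom : ∀ x z : F, v x < v z → v (x + z) = v x := by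
    intro x z hlt
    refine le_antisymm ?_ ?_
    · by_contra hc
      rw [not_le] at hc
      have h2 := hvadd (x + z) (-z)
      rw [add_neg_cancel_right, hvneg] at h2
      rcases min_le_iff.1 h2 with h | h
      · exact absurd (lt_of_lt_of_le hc h) (lt_irrefl _)
      · exact absurd (lt_of_lt_of_le hlt h) (lt_irrefl _)
    · have := hvadd x z
      rwa [min_eq_left hlt.le] at this
  have hvsum_ge : ∀ (s : Finset ℕ) (fc : ℕ → F) (b : WithTop ℤ),
      (∀ i ∈ s, b ≤ v (fc i)) → b ≤ v (∑ i ∈ s, fc i) := by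
    intro s fc b hb
    induction s using Finset.cons_induction with
    | empty => rw [Finset.sum_empty, hv0]; exact le_top
    | cons i s his ih =>
      rw [Finset.sum_cons]
      refine le_trans (le_min (hb i (Finset.mem_cons_self i s)) ?_) (hvadd _ _)
      exact ih fun j hj => hb j (Finset.mem_cons_of_mem hj)
  -- integer lower bound for finitely many values
  have hlb : ∀ s : Finset (WithTop ℤ), ∃ W : ℤ, ∀ z ∈ s, (W : WithTop ℤ) ≤ z := by
    intro s
    induction s using Finset.cons_induction with
    | empty => exact ⟨0, by simp⟩
    | cons z s hzs ih =>
      obtain ⟨W, hW⟩ := ih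
      obtain ⟨w1, hw1⟩ : ∃ w1 : ℤ, (w1 : WithTop ℤ) ≤ z := by
        rcases z with _ | z'
        · exact ⟨0, le_top⟩
        · exact ⟨z', le_rfl⟩
      refine ⟨min W w1, fun z2 hz2 => ?_⟩
      rcases Finset.mem_cons.1 hz2 with h | h
      · subst h; exact le_trans (WithTop.coe_le_coe.2 (min_le_right _ _)) hw1
      · exact le_trans (WithTop.coe_le_coe.2 (min_le_left _ _)) (hW z2 h)
  obtain ⟨W, hW⟩ := hlb (((Finset.range (n + 1)).image (fun j => v (d j))) ∪
      {v e, v (α₂ ^ p ^ N)})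
  have hWd : ∀ j ≤ n, (W : WithTop ℤ) ≤ v (d j) := by
    intro j hj
    refine hW _ (Finset.mem_union_left _ (Finset.mem_image.2 ⟨j, Finset.mem_range.2 (by omega), rfl⟩))
  have hWe : (W : WithTop ℤ) ≤ v e := hW _ (Finset.mem_union_right _ (by simp))
  have hWα : (W : WithTop ℤ) ≤ v (α₂ ^ p ^ N) := hW _ (Finset.mem_union_right _ (by simp))
  -- dominant term analysis
  obtain ⟨s, w, hsn, hdomv⟩ : ∃ (s : ℕ) (w : ℤ), s ≤ n ∧ ∀ l, m < l →
      ((w - W : ℤ) < (p : ℤ) ^ (l - s) - (p : ℤ) ^ (l - s - 1)) →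
      v (hh l) = ((-((p : ℤ) ^ (l - s)) + w : ℤ) : WithTop ℤ) := by
    by_cases ha0 : ab 0 = 0
    · -- the `- τ l * ab 0` term vanishes; dominant term is the first nonzero `d`
      have hex : ∃ j, d j ≠ 0 ∧ j < n := by
        by_contra hno
        push_neg at hno
        have hz : ∀ j, j ≤ n → bb j = 0 := by
          intro j
          induction j with
          | zero =>
            intro _
            have h1 : bb 0 ^ p ^ m = 0 := by rw [← hab, ha0]
            exact pow_eq_zero_iff (hpp m) |>.1 h1
          | succ j ih =>
            intro hj
            have hdj0 : D j = 0 := by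
              have h1 : d j = 0 := by
                by_cases hjn : j < n
                · by_contra h2; exact absurd (hno j h2) (by omega)
                · exact hdgt j (by omega)
              rw [hd] at h1
              exact pow_eq_zero_iff (hpp M) |>.1 h1
            rw [hD, ih (by omega), zero_pow (hpp _), zero_sub, neg_eq_zero] at hdj0
            exact pow_eq_zero_iff (hpp _) |>.1 hdj0
        exact hbbk0 (hz k0 hk0n)
      have hfind : ∃ j, d j ≠ 0 := ⟨hex.choose, hex.choose_spec.1⟩
      obtain ⟨w, hw⟩ := hvint (d (Nat.find hfind)) (Nat.find_spec hfind)
      have hj0n : Nat.find hfind < n :=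
        lt_of_le_of_lt (Nat.find_min' hfind hex.choose_spec.1) hex.choose_spec.2
      have hj0min : ∀ i, i < Nat.find hfind → d i = 0 := fun i hi =>
        not_not.1 (Nat.find_min hfind hi)
      refine ⟨Nat.find hfind + 1, w, by omega, fun l hml harith => ?_⟩
      set j0 := Nat.find hfind with hj0
      have h0 : hh l = τ (l - (j0 + 1)) * d j0 +
          ∑ j ∈ (Finset.range (n + 1)).erase j0, τ (l - 1 - j) * d j := by
        rw [hhh, ha0, mul_zero, sub_zero, hGK]
        have hc : ∀ i ∈ Finset.range (n + 1), τ (l - 1 - i) * d (0 + i) ^ p ^ 0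
            = τ (l - 1 - i) * d i := by
          intro i hi
          rw [pow_zero, pow_one, Nat.zero_add]
        rw [Finset.sum_congr (by rw [Nat.sub_zero]) hc,
          ← Finset.add_sum_erase _ _ (Finset.mem_range.2 (by omega) : j0 ∈ Finset.range (n + 1)),
          show l - 1 - j0 = l - (j0 + 1) from by omega]
      have hvP : v (τ (l - (j0 + 1)) * d j0)
          = ((-((p : ℤ) ^ (l - (j0 + 1))) + w : ℤ) : WithTop ℤ) := by
        rw [hvmul, hvτ, hw, ← WithTop.coe_add]
      have hvQ : ((-((p : ℤ) ^ (l - (j0 + 1) - 1)) + W : ℤ) : WithTop ℤ)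
          ≤ v (∑ j ∈ (Finset.range (n + 1)).erase j0, τ (l - 1 - j) * d j) := by
        apply hvsum_ge
        intro j hj
        obtain ⟨hjne, hjr⟩ := Finset.mem_erase.1 hj
        have hjn : j ≤ n := by have := Finset.mem_range.1 hjr; omega
        rcases lt_or_gt_of_ne hjne with hlt | hgt
        · rw [hj0min j hlt, mul_zero, hv0]; exact le_top
        · rw [hvmul, hvτ, WithTop.coe_add]
          refine add_le_add (WithTop.coe_le_coe.2 ?_) (hWd j hjn)
          have hle : l - 1 - j ≤ l - (j0 + 1) - 1 := by omega
          exact neg_le_neg (pow_le_pow_right₀ (by exact_mod_cast hp2.trans' one_le_two) hle)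
      have hlt2 : v (τ (l - (j0 + 1)) * d j0)
          < v (∑ j ∈ (Finset.range (n + 1)).erase j0, τ (l - 1 - j) * d j) := by
        rw [hvP]
        refine lt_of_lt_of_le ?_ hvQ
        exact WithTop.coe_lt_coe.2 (by linarith [harith])
      rw [h0, hvdom _ _ hlt2, hvP]
    · -- the `- τ l * ab 0` term dominates
      obtain ⟨w, hw⟩ := hvint (ab 0) ha0
      refine ⟨0, w, by omega, fun l hml harith => ?_⟩
      have h0 : hh l = -(τ l * ab 0) + GK l 0 := by rw [hhh]; ring
      have hvP : v (-(τ l * ab 0)) = ((-((p : ℤ) ^ (l - 0)) + w : ℤ) : WithTop ℤ) := by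
        rw [hvneg, hvmul, hvτ, hw, ← WithTop.coe_add, Nat.sub_zero]
      have hvQ : ((-((p : ℤ) ^ (l - 0 - 1)) + W : ℤ) : WithTop ℤ) ≤ v (GK l 0) := by
        rw [hGK]
        apply hvsum_ge
        intro i hi
        have hin : i ≤ n := by have := Finset.mem_range.1 hi; omega
        rw [pow_zero, pow_one, Nat.zero_add, hvmul, hvτ, WithTop.coe_add]
        refine add_le_add (WithTop.coe_le_coe.2 ?_) (hWd i hin)
        have hle : l - 1 - i ≤ l - 0 - 1 := by omega
        exact neg_le_neg (pow_le_pow_right₀ (by exact_mod_cast hp2.trans' one_le_two) hle)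
      have hlt2 : v (-(τ l * ab 0)) < v (GK l 0) := by
        rw [hvP]
        refine lt_of_lt_of_le ?_ hvQ
        exact WithTop.coe_lt_coe.2 (by linarith [harith])
      rw [h0, hvdom _ _ hlt2, hvP]
  -- choose the bound and prove the main statement
  refine ⟨n + m + 2 + (max w (w - W)).toNat, fun l hl X hX => ?_⟩
  have hlm : n + 2 ≤ l := by omega
  have hGK0 : GK l 0 = ∑ j ∈ Finset.range (n + 1), τ (l - 1 - j) * d j := by
    rw [hGK]
    refine Finset.sum_congr (by rw [Nat.sub_zero]) fun i hi => ?_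
    rw [pow_zero, pow_one, Nat.zero_add]
  have hinvpow : ∀ s j : ℕ, ((t ^ p ^ s)⁻¹) ^ p ^ j = τ (s + j) := by
    intro s j
    rw [← hτ, hτpow]
  -- the identity
  have huτ : (1 : F) / t ^ p ^ l = τ l := by rw [hτ, one_div]
  rw [huτ] at hX
  have haevalf : aeval Z f = (algebraMap F A) c +
      ∑ i ∈ Finset.range (n + 1), (algebraMap F A) (ab i) * Z ^ p ^ i := by
    rw [hfeq]
    simp only [map_add, map_sum, map_mul, map_pow, aeval_C, aeval_X]
    congr 1
    refine Finset.sum_congr rfl fun i hi => ?_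
    rw [habn i (by have := Finset.mem_range.1 hi; omega)]
  have hfrobsum : ∀ (w0 : F) (cs : ℕ → F),
      ((algebraMap F A) w0 + ∑ i ∈ Finset.range (n + 1), (algebraMap F A) (cs i) * Z ^ p ^ i) ^ p
        = (algebraMap F A) (w0 ^ p) +
          ∑ i ∈ Finset.range (n + 1), (algebraMap F A) (cs i ^ p) * Z ^ p ^ (i + 1) := by
    intro w0 cs
    rw [add_pow_char, sum_pow_char, ← map_pow]
    congr 1
    refine Finset.sum_congr rfl fun i _ => ?_
    rw [mul_pow, ← map_pow, ← pow_mul, ← pow_succ]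
  rw [haevalf, hfrobsum c ab] at hX
  obtain ⟨TT, hTT⟩ : ∃ TT : ℕ → A, ∀ j, TT j =
      (algebraMap F A) (τ l * ab j - GK l j) * Z ^ p ^ j := ⟨_, fun _ => rfl⟩
  have hsum : (algebraMap F A) (τ l) *
        (∑ i ∈ Finset.range (n + 1), (algebraMap F A) (ab i ^ p) * Z ^ p ^ (i + 1)) -
      (algebraMap F A) (τ l) *
        (∑ i ∈ Finset.range (n + 1), (algebraMap F A) (ab i) * Z ^ p ^ i) -
      ((∑ i ∈ Finset.range (n + 1), (algebraMap F A) (GK l i ^ p) * Z ^ p ^ (i + 1)) -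
        ∑ i ∈ Finset.range (n + 1), (algebraMap F A) (GK l i) * Z ^ p ^ i)
      = (algebraMap F A) (hh l) * Z := by
    rw [Finset.mul_sum, Finset.mul_sum, ← Finset.sum_sub_distrib, ← Finset.sum_sub_distrib,
      ← Finset.sum_sub_distrib]
    have hcong : ∀ i ∈ Finset.range (n + 1),
        (algebraMap F A) (τ l) * ((algebraMap F A) (ab i ^ p) * Z ^ p ^ (i + 1)) -
          (algebraMap F A) (τ l) * ((algebraMap F A) (ab i) * Z ^ p ^ i) -
          ((algebraMap F A) (GK l i ^ p) * Z ^ p ^ (i + 1) -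
            (algebraMap F A) (GK l i) * Z ^ p ^ i)
        = TT (i + 1) - TT i := by
      intro i hi
      have hin : i ≤ n := by have := Finset.mem_range.1 hi; omega
      have h1 : GK l i ^ p = GK l (i + 1) + τ l * (ab i ^ p - ab (i + 1)) := hR1 l hlm i hin
      rw [hTT, hTT, h1]
      simp only [map_sub, map_mul, map_add]
      ring
    rw [Finset.sum_congr rfl hcong, Finset.sum_range_sub TT, hTT, hTT]
    have hab1 : ab (n + 1) = 0 := by rw [hab']; exact if_neg (by omega)
    have hGK1 : GK l (n + 1) = 0 := by
      rw [hGK, show n + 1 - (n + 1) = 0 from by omega, Finset.range_zero, Finset.sum_empty]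
    rw [hab1, hGK1, hhh]
    simp only [mul_zero, sub_zero, map_zero, zero_mul, pow_zero, pow_one, map_sub, map_mul]
    ring
  have hconst : (algebraMap F A) (τ l) *
        ((algebraMap F A) (c ^ p) - (algebraMap F A) c - (algebraMap F A) (α₁ ^ p ^ N)) +
        (algebraMap F A) (α₂ ^ p ^ N) -
        ((algebraMap F A) (GC l ^ p) - (algebraMap F A) (GC l))
      = (algebraMap F A) (et l) := by
    have h2 : τ l * (c ^ p - c - α₁ ^ p ^ N) + α₂ ^ p ^ N - (GC l ^ p - GC l) = et l := by
      rw [het]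
      linear_combination -(hR2 l hlm)
    rw [← h2]
    simp only [map_sub, map_mul, map_add]
  have hiden : (X - aeval Z (C (GC l) + ∑ i ∈ Finset.range (n + 1),
        C (GK l i) * Polynomial.X ^ p ^ i)) ^ p -
      (X - aeval Z (C (GC l) + ∑ i ∈ Finset.range (n + 1), C (GK l i) * Polynomial.X ^ p ^ i))
      = (algebraMap F A) (hh l) * Z + (algebraMap F A) (et l) := by
    have haevalg : aeval Z (C (GC l) + ∑ i ∈ Finset.range (n + 1),
        C (GK l i) * Polynomial.X ^ p ^ i) = (algebraMap F A) (GC l) +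
        ∑ i ∈ Finset.range (n + 1), (algebraMap F A) (GK l i) * Z ^ p ^ i := by
      simp only [map_add, map_sum, map_mul, map_pow, aeval_C, aeval_X]
    rw [sub_pow_char, haevalg, hfrobsum (GC l) (GK l)]
    linear_combination hX + hsum + hconst
  -- auxiliary data for the power witnesses
  obtain ⟨E, hE⟩ : ∃ E : ℕ → F, ∀ j, E j = bb j ^ p ^ (n - j) - bb (j + 1) ^ p ^ (n - j - 1) :=
    ⟨_, fun _ => rfl⟩
  have hEd : ∀ j ≤ n, E j ^ p ^ (M + 1) = d j := by
    intro j hj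
    by_cases hjn : j < n
    · rw [hE, sub_pow_char_pow, hppow, hppow, hd, hD, sub_pow_char_pow, hppow, hppow,
        show n - j + (M + 1) = n + 1 - j + M from by omega,
        show n - j - 1 + (M + 1) = n - j + M from by omega]
    · have hje : j = n := by omega
      rw [hje, hE, hd, hD, hbbz (n + 1) (by omega), zero_pow (hpp _), zero_pow (hpp _),
        sub_zero, sub_zero, hppow, hppow,
        show n - n + (M + 1) = n + 1 - n + M from by omega]
  refine ⟨C (GC l) + ∑ i ∈ Finset.range (n + 1), C (GK l i) * Polynomial.X ^ p ^ i, ?_,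
    hh l, et l, ?_, ?_, hiden, ?_⟩
  · -- membership in the special set
    rw [hMn1]
    refine ⟨GC l, GK l,
      ⟨∑ j ∈ Finset.range (n + 1), (t ^ p ^ (l - 1 - j - M))⁻¹ * e0 ^ p ^ (n - j), ?_⟩,
      fun i hi => ⟨∑ j ∈ Finset.range (n + 1 - i), (t ^ p ^ (l - 1 - j - M))⁻¹ * D (i + j) ^ p ^ i,
        ?_⟩, ⟨k0, hk0n, ?_⟩, rfl⟩
    · rw [hGC, sum_pow_char_pow]
      refine Finset.sum_congr rfl fun j hj => ?_
      have hjn : j < n + 1 := Finset.mem_range.1 hj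
      rw [mul_pow, hinvpow, show l - 1 - j - M + M = l - 1 - j from by omega,
        he, hppow, hppow, show M + (n - j) = n - j + M from by omega]
    · rw [hGK, sum_pow_char_pow]
      refine Finset.sum_congr rfl fun j hj => ?_
      have hjn : j < n + 1 - i := Finset.mem_range.1 hj
      rw [mul_pow, hinvpow, show l - 1 - j - M + M = l - 1 - j from by omega,
        hd, hppow, hppow, show M + i = i + M from by omega]
    · have hsingle : GK l k0 = τ (l - 1 - 0) * d (k0 + 0) ^ p ^ k0 := by
        rw [hGK]
        refine Finset.sum_eq_single_of_mem 0 (Finset.mem_range.2 (by omega)) ?_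
        intro i hi hine
        rw [hdgt (k0 + i) (by omega), zero_pow (hpp _), mul_zero]
      rw [hsingle]
      exact mul_ne_zero (hτne _) (pow_ne_zero _ hdk0)
  · -- h is a p^(m-n)-th power
    rw [hMn]
    refine ⟨(∑ j ∈ Finset.range (n + 1), (t ^ p ^ (l - 1 - j - (M + 1)))⁻¹ * E j) -
      (t ^ p ^ (l - (M + 1)))⁻¹ * bb 0 ^ p ^ n, ?_⟩
    rw [hhh, hGK0, sub_pow_char_pow, sum_pow_char_pow]
    congr 1
    · refine Finset.sum_congr rfl fun j hj => ?_
      have hjn : j < n + 1 := Finset.mem_range.1 hj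
      rw [mul_pow, hinvpow, show l - 1 - j - (M + 1) + (M + 1) = l - 1 - j from by omega,
        hEd j (by omega)]
    · rw [mul_pow, hinvpow, show l - (M + 1) + (M + 1) = l from by omega, hppow,
        show n + (M + 1) = m from by omega, hab]
  · -- η is a p^(m-n-1)-th power
    rw [hMn1]
    refine ⟨α₂ ^ p ^ (N - M) + (t ^ p ^ (l - n - 1 - M))⁻¹ * e0, ?_⟩
    rw [het, add_pow_char_pow, mul_pow, hinvpow,
      show l - n - 1 - M + M = l - n - 1 from by omega,
      hppow, show N - M + M = N from by omega, he]
  · -- valuation estimates for large l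
    intro hll0
    clear hiden hsum hconst hX hfrobsum haevalf hTT huτ hGK0 hinvpow hEd hE
    have h2p : (2 : ℤ) ≤ (p : ℤ) := by exact_mod_cast hp2
    have hgrow1 : ((l : ℤ) - n) ≤ (p : ℤ) ^ (l - n - 1) := by
      have h2 : (l - n - 1 : ℕ) < 2 ^ (l - n - 1 : ℕ) := Nat.lt_two_pow_self
      have h3 : ((2 : ℤ)) ^ (l - n - 1 : ℕ) ≤ (p : ℤ) ^ (l - n - 1 : ℕ) :=
        pow_le_pow_left₀ (by norm_num) h2p _
      have h4 : ((l - n - 1 : ℕ) : ℤ) + 1 ≤ (2 : ℤ) ^ (l - n - 1 : ℕ) := by exact_mod_cast h2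
      have h5 : ((l - n - 1 : ℕ) : ℤ) = (l : ℤ) - n - 1 := by push_cast; omega
      linarith only [h3, h4, h5]
    have hgrow2 : (p : ℤ) ^ (l - n - 1) ≤ (p : ℤ) ^ (l - s - 1) :=
      pow_le_pow_right₀ (by linarith only [h2p]) (by omega)
    have hgrow2b : (p : ℤ) ^ (l - s - 1) ≤ (p : ℤ) ^ (l - s) :=
      pow_le_pow_right₀ (by linarith only [h2p]) (by omega)
    have hgrow3 : (p : ℤ) ^ (l - s - 1) ≤ (p : ℤ) ^ (l - s) - (p : ℤ) ^ (l - s - 1) := by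
      have h6 : (p : ℤ) ^ (l - s) = (p : ℤ) ^ (l - s - 1) * p := by
        rw [← pow_succ, show l - s - 1 + 1 = l - s from by omega]
      have h7 : (0 : ℤ) ≤ (p : ℤ) ^ (l - s - 1) := pow_nonneg (by linarith only [h2p]) _
      have h8 : (p : ℤ) ^ (l - s - 1) * 2 ≤ (p : ℤ) ^ (l - s - 1) * p :=
        mul_le_mul_of_nonneg_left h2p h7
      linarith only [h6, h8]
    have hmax : (max w (w - W) : ℤ) ≤ (l : ℤ) - n - m - 2 := by
      have h5 := Int.self_le_toNat (max w (w - W))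
      have h6 : ((n + m + 2 + (max w (w - W)).toNat : ℕ) : ℤ) ≤ (l : ℤ) := by exact_mod_cast hll0
      push_cast at h6
      omega
    have hA : w - W < (p : ℤ) ^ (l - s) - (p : ℤ) ^ (l - s - 1) := by
      linarith only [le_max_right w (w - W), hmax, hgrow1, hgrow2, hgrow3]
    have hvh := hdomv l hl hA
    constructor
    · rw [hvh]
      have hB : -((p : ℤ) ^ (l - s)) + w < 0 := by
        linarith only [le_max_left w (w - W), hmax, hgrow1, hgrow2, hgrow2b]
      exact_mod_cast WithTop.coe_lt_coe.2 hB
    · rw [hvh, het]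
      refine lt_of_lt_of_le (lt_min ?_ ?_) (hvadd _ _)
      · refine lt_of_lt_of_le (WithTop.coe_lt_coe.2 ?_) hWα
        linarith only [le_max_right w (w - W), hmax, hgrow1, hgrow2, hgrow2b]
      · have h7 : ((-((p : ℤ) ^ (l - n - 1)) + W : ℤ) : WithTop ℤ) ≤ v (τ (l - n - 1) * e) := by
          rw [hvmul, hvτ, WithTop.coe_add]
          exact add_le_add le_rfl hWe
        refine lt_of_lt_of_le (WithTop.coe_lt_coe.2 ?_) h7
        linarith only [le_max_right w (w - W), hmax, hgrow1, hgrow2, hgrow3]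
end
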